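/- arXiv:1505.06912 — 4 statements merged into one kernel-verified Lean document; each statement's English description precedes it below -/
import Mathlib

section
/- Let μ be a probability distribution on [0,∞). Suppose for every c > 0 there exists a probability distribution ρ_c with support contained in [0,c] such that ρ_c * μ is locally subexponential. Then μ is locally subexponential. -/
open MeasureTheory Filter Set

noncomputable def conv (f g : ℝ → ℝ) (x : ℝ) : ℝ := ∫ u, f (x - u) * g u

def IsDensity (f : ℝ → ℝ) : Prop := (∀ x, 0 ≤ f x) ∧ (∫ x, f x) = 1

def LongTailedFun (f : ℝ → ℝ) : Prop :=
  (∀ᶠ x in atTop, 0 < f x) ∧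
  ∀ a : ℝ, Tendsto (fun x => f (x + a) / f x) atTop (nhds 1)

def LongDensity (f : ℝ → ℝ) : Prop := IsDensity f ∧ LongTailedFun f

def SubexpDensity (f : ℝ → ℝ) : Prop :=
  LongDensity f ∧ Tendsto (fun x => conv f f x / f x) atTop (nhds 2)

noncomputable def mconv (μ ν : Measure ℝ) : Measure ℝ :=
  (μ.prod ν).map (fun p : ℝ × ℝ => p.1 + p.2)

noncomputable def locMass (μ : Measure ℝ) (c x : ℝ) : ℝ := (μ (Ioc x (x + c))).toReal

def MemLDelta (μ : Measure ℝ) (c : ℝ) : Prop :=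
  (∀ᶠ x in atTop, 0 < locMass μ c x) ∧
  ∀ a : ℝ, Tendsto (fun x => locMass μ c (x + a) / locMass μ c x) atTop (nhds 1)

def MemSDelta (μ : Measure ℝ) (c : ℝ) : Prop :=
  MemLDelta μ c ∧
  Tendsto (fun x => locMass (mconv μ μ) c x / locMass μ c x) atTop (nhds 2)

def LLoc (μ : Measure ℝ) : Prop := ∀ c > 0, MemLDelta μ c
def SLoc (μ : Measure ℝ) : Prop := ∀ c > 0, MemSDelta μ c

def LAc (μ : Measure ℝ) : Prop :=
  ∃ g : ℝ → ℝ, LongDensity g ∧ μ = volume.withDensity (fun x => ENNReal.ofReal (g x))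
def SAc (μ : Measure ℝ) : Prop :=
  ∃ g : ℝ → ℝ, SubexpDensity g ∧ μ = volume.withDensity (fun x => ENNReal.ofReal (g x))

instance mconv_prob (μ ν : Measure ℝ) [IsProbabilityMeasure μ] [IsProbabilityMeasure ν] :
    IsProbabilityMeasure (mconv μ ν) := Measure.isProbabilityMeasure_map measurable_add.aemeasurable

lemma mconv_assoc (μ ν ρ : Measure ℝ) [SFinite μ] [SFinite ν] [SFinite ρ] :
    mconv (mconv μ ν) ρ = mconv μ (mconv ν ρ) := by
  unfold mconv
  conv_lhs => rw [← Measure.map_id (μ := ρ)]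
  conv_rhs => rw [← Measure.map_id (μ := μ)]
  rw [Measure.map_prod_map _ _ measurable_add measurable_id,
    Measure.map_prod_map _ _ measurable_id measurable_add,
    Measure.map_map measurable_add (Measurable.prodMap measurable_add measurable_id),
    Measure.map_map measurable_add (measurable_id.prodMap measurable_add),
    ← Measure.prodAssoc_prod, Measure.map_map _ MeasurableEquiv.prodAssoc.measurable]
  · congr 1
    ext p
    simp [MeasurableEquiv.prodAssoc, Prod.map, add_assoc]
  · fun_prop

lemma mconv_comm (μ ν : Measure ℝ) [SFinite μ] [SFinite ν] : mconv μ ν = mconv ν μ :=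
  Measure.conv_comm μ ν

lemma mconv_apply (ρ μ : Measure ℝ) [SFinite ρ] [SFinite μ] {s : Set ℝ}
    (hs : MeasurableSet s) :
    mconv ρ μ s = ∫⁻ u, μ {v | u + v ∈ s} ∂ρ := by
  rw [mconv, Measure.map_apply measurable_add hs,
    Measure.prod_apply (hs.preimage measurable_add)]
  rfl

lemma ae_Icc (ρ : Measure ℝ) {h : ℝ} (hρ : ρ ((Icc 0 h)ᶜ) = 0) :
    ∀ᵐ u ∂ρ, u ∈ Icc (0:ℝ) h := by
  rw [ae_iff]
  convert hρ using 2
  rfl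

lemma mconv_supp (ρ₁ ρ₂ : Measure ℝ) [IsProbabilityMeasure ρ₁] [IsProbabilityMeasure ρ₂]
    {h₁ h₂ : ℝ} (hρ₁ : ρ₁ ((Icc 0 h₁)ᶜ) = 0) (hρ₂ : ρ₂ ((Icc 0 h₂)ᶜ) = 0) :
    mconv ρ₁ ρ₂ ((Icc 0 (h₁ + h₂))ᶜ) = 0 := by
  rw [mconv_apply _ _ measurableSet_Icc.compl]
  rw [← lintegral_zero (μ := ρ₁)]
  refine lintegral_congr_ae ((ae_Icc ρ₁ hρ₁).mono fun u hu => ?_)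
  refine measure_mono_null (fun v hv => ?_) hρ₂
  intro hmem
  exact hv ⟨by linarith [hu.1, hmem.1], by linarith [hu.2, hmem.2]⟩

lemma locMass_nonneg (μ : Measure ℝ) (c x : ℝ) : 0 ≤ locMass μ c x := ENNReal.toReal_nonneg

lemma locMass_sand_lower (ρ μ : Measure ℝ) [IsProbabilityMeasure ρ] [IsProbabilityMeasure μ]
    {h : ℝ} (hh : 0 ≤ h) (hρ : ρ ((Icc 0 h)ᶜ) = 0) (b x : ℝ) :
    locMass μ b x ≤ locMass (mconv ρ μ) (b + h) x := by
  refine ENNReal.toReal_mono (measure_ne_top _ _) ?_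
  rw [mconv_apply _ _ measurableSet_Ioc]
  calc μ (Ioc x (x + b)) = ∫⁻ _, μ (Ioc x (x + b)) ∂ρ := by simp
    _ ≤ _ := by
        refine lintegral_mono_ae ((ae_Icc ρ hρ).mono fun u hu => measure_mono fun v hv => ?_)
        exact ⟨lt_of_lt_of_le hv.1 (le_add_of_nonneg_left hu.1), by linarith [hv.2, hu.2]⟩

lemma locMass_sand_upper (ρ μ : Measure ℝ) [IsProbabilityMeasure ρ] [IsProbabilityMeasure μ]
    {h : ℝ} (hh : 0 ≤ h) (hρ : ρ ((Icc 0 h)ᶜ) = 0) (b x : ℝ) :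
    locMass (mconv ρ μ) b x ≤ locMass μ (b + h) (x - h) := by
  refine ENNReal.toReal_mono (measure_ne_top _ _) ?_
  rw [mconv_apply _ _ measurableSet_Ioc, show x - h + (b + h) = x + b by ring]
  calc (∫⁻ u, μ {v | u + v ∈ Ioc x (x + b)} ∂ρ)
      ≤ ∫⁻ _, μ (Ioc (x - h) (x + b)) ∂ρ := by
        refine lintegral_mono_ae ((ae_Icc ρ hρ).mono fun u hu => measure_mono fun v hv => ?_)
        exact ⟨by linarith [hv.1, hu.2], by linarith [hv.2, hu.1]⟩
    _ = μ (Ioc (x - h) (x + b)) := by simp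

lemma locMass_add (μ : Measure ℝ) [IsFiniteMeasure μ] {a b : ℝ} (ha : 0 ≤ a) (hb : 0 ≤ b)
    (x : ℝ) : locMass μ (a + b) x = locMass μ a x + locMass μ b (x + a) := by
  unfold locMass
  rw [← ENNReal.toReal_add (measure_ne_top _ _) (measure_ne_top _ _), ← measure_union]
  · rw [show x + (a + b) = (x + a) + b by ring,
      Set.Ioc_union_Ioc_eq_Ioc (by linarith) (by linarith)]
  · exact (Set.Ioc_disjoint_Ioc_of_le le_rfl).mono_right (Ioc_subset_Ioc le_rfl le_rfl)
  · exact measurableSet_Ioc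

lemma tendsto_locMass_nat (ν : Measure ℝ) [IsFiniteMeasure ν] {δ : ℝ} (hδ : 0 < δ)
    (hL : MemLDelta ν δ) (k : ℕ) (a : ℝ) :
    Tendsto (fun x => locMass ν (k * δ) (x + a) / locMass ν δ x) atTop (nhds k) := by
  induction k with
  | zero =>
      simp only [Nat.cast_zero, zero_mul]
      have : ∀ x : ℝ, locMass ν 0 (x + a) = 0 := by
        intro x; simp [locMass]
      simpa [this] using tendsto_const_nhds
  | succ k ih =>
      have h1 : ∀ x : ℝ, locMass ν ((k + 1 : ℕ) * δ) (x + a)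
          = locMass ν (k * δ) (x + a) + locMass ν δ (x + (a + k * δ)) := by
        intro x
        rw [show ((k + 1 : ℕ) : ℝ) * δ = k * δ + δ by push_cast; ring,
          locMass_add ν (by positivity) hδ.le, add_assoc]
      have h2 := ih.add (hL.2 (a + k * δ))
      rw [show ((k:ℝ) + 1) = ((k+1 : ℕ) : ℝ) by push_cast; ring] at h2
      refine Tendsto.congr (fun x => ?_) h2
      rw [h1, add_div]

lemma tendsto_locMass_ratio (ν : Measure ℝ) [IsFiniteMeasure ν] {δ : ℝ} (hδ : 0 < δ)
    (hL : MemLDelta ν δ) (k m : ℕ) (hm : 0 < m) (a b : ℝ) :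
    Tendsto (fun x => locMass ν (k * δ) (x + a) / locMass ν (m * δ) (x + b)) atTop
      (nhds (k / m)) := by
  have hA := tendsto_locMass_nat ν hδ hL k a
  have hB := tendsto_locMass_nat ν hδ hL m b
  have hd := hA.div hB (by exact_mod_cast hm.ne')
  refine Tendsto.congr' ?_ hd
  filter_upwards [hL.1] with x hx
  rcases eq_or_ne (locMass ν (m * δ) (x + b)) 0 with h0 | h0
  · simp [h0]
  · simp only [Pi.div_apply]; exact div_div_div_cancel_right₀ hx.ne' _ _

lemma div_mul_div_helper (A d B : ℝ) (hd : d ≠ 0) : (A / d) * (d / B) = A / B := by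
  rcases eq_or_ne B 0 with h|h
  · simp [h]
  · field_simp

theorem stmt3 (μ : Measure ℝ) [IsProbabilityMeasure μ] (hsupp : μ (Iio 0) = 0)
    (h : ∀ c > (0:ℝ), ∃ ρ : Measure ℝ, IsProbabilityMeasure ρ ∧
      ρ ((Icc (0:ℝ) c)ᶜ) = 0 ∧ SLoc (mconv ρ μ)) :
    SLoc μ := by
  intro c hc
  have key : ∀ m : ℕ, ∃ ρ : Measure ℝ, IsProbabilityMeasure ρ ∧
      ρ ((Icc (0:ℝ) (c / ((m:ℝ) + 3)))ᶜ) = 0 ∧ SLoc (mconv ρ μ) := by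
    intro m
    exact h (c / ((m:ℝ) + 3)) (by positivity)
  choose ρ hρp hρsupp hρS using key
  set δ : ℕ → ℝ := fun m => c / ((m:ℝ) + 3) with hδdef
  have hδ : ∀ m, 0 < δ m := fun m => by positivity
  have hceq : ∀ m : ℕ, ((m:ℝ) + 3) * δ m = c := by
    intro m
    have : ((m:ℝ) + 3) ≠ 0 := by positivity
    simp only [hδdef]; field_simp
  haveI : ∀ m, IsProbabilityMeasure (ρ m) := hρp
  -- basic positivity facts for windows k*δ
  have hkδ : ∀ (m k : ℕ), 0 < k → (0:ℝ) < (k:ℝ) * δ m := by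
    intro m k hk
    have : (0:ℝ) < (k:ℝ) := by exact_mod_cast hk
    exact mul_pos this (hδ m)
  -- local L property of ν at δ
  have hLδ : ∀ m, MemLDelta (mconv (ρ m) μ) (δ m) := fun m => (hρS m (δ m) (hδ m)).1
  -- sandwich bounds
  have hB1 : ∀ (m : ℕ) (x : ℝ),
      locMass (mconv (ρ m) μ) (((m+2:ℕ):ℝ) * δ m) (x + δ m) ≤ locMass μ c x := by
    intro m x
    have := locMass_sand_upper (ρ m) μ (hδ m).le (hρsupp m) (((m+2:ℕ):ℝ) * δ m) (x + δ m)
    rw [show ((m+2:ℕ):ℝ) * δ m + δ m = c by push_cast; rw [← hceq m]; ring,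
      show x + δ m - δ m = x by ring] at this
    exact this
  have hB2 : ∀ (m : ℕ) (x : ℝ),
      locMass μ c x ≤ locMass (mconv (ρ m) μ) (((m+4:ℕ):ℝ) * δ m) x := by
    intro m x
    have := locMass_sand_lower (ρ m) μ (hδ m).le (hρsupp m) c x
    rw [show c + δ m = ((m+4:ℕ):ℝ) * δ m by push_cast; rw [← hceq m]; ring] at this
    exact this
  -- the convolution squared identity
  have hassoc : ∀ m, mconv (mconv (ρ m) μ) (mconv (ρ m) μ)
      = mconv (mconv (ρ m) (ρ m)) (mconv μ μ) := by
    intro m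
    rw [mconv_assoc, mconv_comm μ (mconv (ρ m) μ), mconv_assoc, ← mconv_assoc]
  have hρρ : ∀ m, (mconv (ρ m) (ρ m)) ((Icc 0 (δ m + δ m))ᶜ) = 0 := fun m =>
    mconv_supp _ _ (hρsupp m) (hρsupp m)
  have hB3 : ∀ (m : ℕ) (x : ℝ), locMass (mconv μ μ) c x
      ≤ locMass (mconv (mconv (ρ m) μ) (mconv (ρ m) μ)) (((m+5:ℕ):ℝ) * δ m) x := by
    intro m x
    rw [hassoc m]
    have := locMass_sand_lower (mconv (ρ m) (ρ m)) (mconv μ μ)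
      (by linarith [hδ m]) (hρρ m) c x
    rw [show c + (δ m + δ m) = ((m+5:ℕ):ℝ) * δ m by push_cast; rw [← hceq m]; ring] at this
    exact this
  have hB4 : ∀ (m : ℕ) (x : ℝ),
      locMass (mconv (mconv (ρ m) μ) (mconv (ρ m) μ)) (((m+1:ℕ):ℝ) * δ m) (x + (δ m + δ m))
      ≤ locMass (mconv μ μ) c x := by
    intro m x
    rw [hassoc m]
    have := locMass_sand_upper (mconv (ρ m) (ρ m)) (mconv μ μ)
      (by linarith [hδ m]) (hρρ m) (((m+1:ℕ):ℝ) * δ m) (x + (δ m + δ m))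
    rw [show ((m+1:ℕ):ℝ) * δ m + (δ m + δ m) = c by push_cast; rw [← hceq m]; ring,
      show x + (δ m + δ m) - (δ m + δ m) = x by ring] at this
    exact this
  -- eventual positivity of lower bounds
  have hposB : ∀ m : ℕ, ∀ᶠ x in atTop,
      0 < locMass (mconv (ρ m) μ) (((m+2:ℕ):ℝ) * δ m) (x + δ m) := by
    intro m
    exact (tendsto_atTop_add_const_right atTop (δ m) tendsto_id).eventually
      ((hρS m (((m+2:ℕ):ℝ) * δ m) (hkδ m (m+2) (by omega))).1.1)
  have hposμ : ∀ᶠ x in atTop, 0 < locMass μ c x := by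
    filter_upwards [hposB 0] with x hx
    exact lt_of_lt_of_le hx (hB1 0 x)
  refine ⟨⟨hposμ, ?_⟩, ?_⟩
  · -- long-tailedness
    intro a
    rw [Metric.tendsto_nhds]
    intro ε hε
    obtain ⟨m, hm⟩ := exists_nat_gt (2 / ε)
    have hm2 : 2 < ε * m := by
      rw [div_lt_iff₀ hε] at hm; linarith
    have TU := tendsto_locMass_ratio (mconv (ρ m) μ) (hδ m) (hLδ m) (m+4) (m+2)
      (by omega) a (δ m)
    have TL := tendsto_locMass_ratio (mconv (ρ m) μ) (hδ m) (hLδ m) (m+2) (m+4)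
      (by omega) (a + δ m) 0
    have hub : ((m+4:ℕ):ℝ) / ((m+2:ℕ):ℝ) < 1 + ε := by
      push_cast
      rw [div_lt_iff₀ (by positivity)]
      nlinarith [hε.le]
    have hlb : 1 - ε < ((m+2:ℕ):ℝ) / ((m+4:ℕ):ℝ) := by
      push_cast
      rw [lt_div_iff₀ (by positivity)]
      nlinarith [hε.le]
    have ev2 := TU.eventually_lt_const hub
    have ev3 := TL.eventually_const_lt hlb
    filter_upwards [hposB m, ev2, ev3,
      (tendsto_atTop_add_const_right atTop a tendsto_id).eventually (hposB m)]
      with x h1 h2 h3 h4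
    have hd : 0 < locMass μ c x := lt_of_lt_of_le h1 (hB1 m x)
    have hub' : locMass μ c (x + a) / locMass μ c x
        ≤ locMass (mconv (ρ m) μ) (((m+4:ℕ):ℝ) * δ m) (x + a)
          / locMass (mconv (ρ m) μ) (((m+2:ℕ):ℝ) * δ m) (x + δ m) :=
      div_le_div₀ (locMass_nonneg _ _ _) (hB2 m (x + a)) h1 (hB1 m x)
    have e1 : x + (a + δ m) = (x + a) + δ m := by ring
    rw [e1] at h3
    have hlb' : locMass (mconv (ρ m) μ) (((m+2:ℕ):ℝ) * δ m) ((x + a) + δ m)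
          / locMass (mconv (ρ m) μ) (((m+4:ℕ):ℝ) * δ m) (x + 0)
        ≤ locMass μ c (x + a) / locMass μ c x := by
      rw [add_zero]
      exact div_le_div₀ (locMass_nonneg _ _ _) (hB1 m (x + a)) hd (hB2 m x)
    rw [Real.dist_eq, abs_lt]
    constructor
    · linarith [le_trans h3.le hlb']
    · linarith [lt_of_le_of_lt hub' h2]
  · -- subexponentiality
    rw [Metric.tendsto_nhds]
    intro ε hε
    obtain ⟨m, hm⟩ := exists_nat_gt (6 / ε)
    have hm6 : 6 < ε * m := by
      rw [div_lt_iff₀ hε] at hm; linarith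
    have TU2 : Tendsto (fun x =>
        locMass (mconv (mconv (ρ m) μ) (mconv (ρ m) μ)) (((m+5:ℕ):ℝ) * δ m) x
        / locMass (mconv (ρ m) μ) (((m+2:ℕ):ℝ) * δ m) (x + δ m)) atTop
        (nhds (2 * (((m+5:ℕ):ℝ) / ((m+2:ℕ):ℝ)))) := by
      have t1 := (hρS m (((m+5:ℕ):ℝ) * δ m) (hkδ m (m+5) (by omega))).2
      have t2 := tendsto_locMass_ratio (mconv (ρ m) μ) (hδ m) (hLδ m) (m+5) (m+2)
        (by omega) 0 (δ m)
      refine Tendsto.congr' ?_ (t1.mul t2)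
      filter_upwards [(hρS m (((m+5:ℕ):ℝ) * δ m) (hkδ m (m+5) (by omega))).1.1] with x hx
      simp only [add_zero]
      exact div_mul_div_helper _ _ _ hx.ne'
    have TL2 : Tendsto (fun x =>
        locMass (mconv (mconv (ρ m) μ) (mconv (ρ m) μ)) (((m+1:ℕ):ℝ) * δ m) (x + (δ m + δ m))
        / locMass (mconv (ρ m) μ) (((m+4:ℕ):ℝ) * δ m) x) atTop
        (nhds (2 * (((m+1:ℕ):ℝ) / ((m+4:ℕ):ℝ)))) := by
      have t1 := ((hρS m (((m+1:ℕ):ℝ) * δ m) (hkδ m (m+1) (by omega))).2).comp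
        (tendsto_atTop_add_const_right atTop (δ m + δ m) tendsto_id)
      have t2 := tendsto_locMass_ratio (mconv (ρ m) μ) (hδ m) (hLδ m) (m+1) (m+4)
        (by omega) (δ m + δ m) 0
      refine Tendsto.congr' ?_ (t1.mul t2)
      have hpos1 := (tendsto_atTop_add_const_right atTop (δ m + δ m) tendsto_id).eventually
        ((hρS m (((m+1:ℕ):ℝ) * δ m) (hkδ m (m+1) (by omega))).1.1)
      filter_upwards [hpos1] with x hx
      simp only [Function.comp_apply, add_zero, id_eq]
      exact div_mul_div_helper _ _ _ hx.ne'
    have hub : 2 * (((m+5:ℕ):ℝ) / ((m+2:ℕ):ℝ)) < 2 + ε := by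
      push_cast
      rw [mul_div_assoc', div_lt_iff₀ (by positivity)]
      nlinarith [hε.le]
    have hlb : 2 - ε < 2 * (((m+1:ℕ):ℝ) / ((m+4:ℕ):ℝ)) := by
      push_cast
      rw [mul_div_assoc', lt_div_iff₀ (by positivity)]
      nlinarith [hε.le]
    have ev2 := TU2.eventually_lt_const hub
    have ev3 := TL2.eventually_const_lt hlb
    filter_upwards [hposB m, ev2, ev3] with x h1 h2 h3
    have hd : 0 < locMass μ c x := lt_of_lt_of_le h1 (hB1 m x)
    have hub' : locMass (mconv μ μ) c x / locMass μ c x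
        ≤ locMass (mconv (mconv (ρ m) μ) (mconv (ρ m) μ)) (((m+5:ℕ):ℝ) * δ m) x
          / locMass (mconv (ρ m) μ) (((m+2:ℕ):ℝ) * δ m) (x + δ m) :=
      div_le_div₀ (locMass_nonneg _ _ _) (hB3 m x) h1 (hB1 m x)
    have hlb' : locMass (mconv (mconv (ρ m) μ) (mconv (ρ m) μ)) (((m+1:ℕ):ℝ) * δ m)
          (x + (δ m + δ m)) / locMass (mconv (ρ m) μ) (((m+4:ℕ):ℝ) * δ m) x
        ≤ locMass (mconv μ μ) c x / locMass μ c x :=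
      div_le_div₀ (locMass_nonneg _ _ _) (hB4 m x) hd (hB2 m x)
    rw [Real.dist_eq, abs_lt]
    constructor
    · linarith [le_trans h3.le hlb']
    · linarith [lt_of_le_of_lt hub' h2]
end

section
/- The class S_d of subexponential densities on ℝ is not closed under asymptotic equivalence: there exist probability densities p₁ ∈ S_d and p₂ ∉ S_d on ℝ with p₂(x) ∼ c·p₁(x) as x → ∞ for some constant c > 0. -/
open MeasureTheory Filter Set

open scoped ENNReal

namespace Stmt7Aux



noncomputable def LL (t : ℝ) : ℝ := (3 + Real.sin (Real.sqrt t)) * t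

lemma LL_le_four_mul {t : ℝ} (ht : 0 ≤ t) : LL t ≤ 4 * t := by
  have h := Real.sin_le_one (Real.sqrt t); unfold LL; nlinarith

lemma two_mul_le_LL {t : ℝ} (ht : 0 ≤ t) : 2 * t ≤ LL t := by
  have h := Real.neg_one_le_sin (Real.sqrt t); unfold LL; nlinarith

lemma LL_nonneg {t : ℝ} (ht : 0 ≤ t) : 0 ≤ LL t := le_trans (by linarith) (two_mul_le_LL ht)

noncomputable def f0 (x : ℝ) : ℝ := if 1 ≤ x then Real.exp (-(LL (Real.log x))) else 0

lemma f0_nonneg (x : ℝ) : 0 ≤ f0 x := by unfold f0; split <;> positivity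

lemma f0_of_one_le {x : ℝ} (hx : 1 ≤ x) : f0 x = Real.exp (-(LL (Real.log x))) := if_pos hx

lemma f0_pos {x : ℝ} (hx : 1 ≤ x) : 0 < f0 x := by rw [f0_of_one_le hx]; positivity

lemma f0_le_one (x : ℝ) : f0 x ≤ 1 := by
  unfold f0; split
  · rename_i hx
    rw [show (1:ℝ) = Real.exp 0 by simp]
    exact Real.exp_le_exp.2 (by simpa using LL_nonneg (Real.log_nonneg hx))
  · norm_num

lemma f0_le_rpow {x : ℝ} (hx : 1 ≤ x) : f0 x ≤ x ^ (-2 : ℝ) := by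
  rw [f0_of_one_le hx, Real.rpow_def_of_pos (by linarith)]
  exact Real.exp_le_exp.2 (by have := two_mul_le_LL (Real.log_nonneg hx); linarith)

lemma measurable_LL : Measurable LL :=
  ((continuous_const.add (Real.continuous_sin.comp Real.continuous_sqrt)).mul continuous_id).measurable

lemma measurable_f0 : Measurable f0 :=
  Measurable.ite measurableSet_Ici
    (Real.measurable_exp.comp (measurable_LL.comp Real.measurable_log).neg) measurable_const

lemma integrable_g0 : Integrable (Set.indicator (Ici (1:ℝ)) (fun x => x ^ (-2 : ℝ))) := by
  rw [integrable_indicator_iff measurableSet_Ici]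
  exact (integrableOn_Ici_iff_integrableOn_Ioi (f := fun x : ℝ => x ^ (-2 : ℝ)) (b := 1) (by simp)).2 (integrableOn_Ioi_rpow_of_lt (by norm_num) one_pos)

lemma integrable_f0 : Integrable f0 := by
  refine integrable_g0.mono' measurable_f0.aestronglyMeasurable (ae_of_all _ fun x => ?_)
  rw [Real.norm_of_nonneg (f0_nonneg x)]
  by_cases hx : 1 ≤ x
  · rw [Set.indicator_of_mem (show x ∈ Ici 1 from hx)]; exact f0_le_rpow hx
  · rw [Set.indicator_of_notMem (show x ∉ Ici 1 from hx)]
    unfold f0; rw [if_neg hx]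

noncomputable def II : ℝ := ∫ x, f0 x

lemma II_pos : 0 < II := by
  have h1 : ∫ x in Ioc (1:ℝ) 2, f0 x ≤ II :=
    setIntegral_le_integral integrable_f0 (ae_of_all _ f0_nonneg)
  have h2 : Real.exp (-8 : ℝ) * (volume (Ioc (1:ℝ) 2)).toReal ≤ ∫ x in Ioc (1:ℝ) 2, f0 x := by
    refine setIntegral_ge_of_const_le_real measurableSet_Ioc (by simp) (fun x hx => ?_)
      integrable_f0.integrableOn
    rw [f0_of_one_le hx.1.le]
    refine Real.exp_le_exp.2 ?_
    have hlog : Real.log x ≤ 1 := by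
      have := Real.log_le_sub_one_of_pos (show (0:ℝ) < x by linarith [hx.1])
      linarith [hx.2]
    have h4 := LL_le_four_mul (Real.log_nonneg hx.1.le)
    linarith
  have h3 : (volume (Ioc (1:ℝ) 2)).toReal = 1 := by
    rw [Real.volume_Ioc]; norm_num
  rw [h3, mul_one] at h2
  calc (0:ℝ) < Real.exp (-8) := Real.exp_pos _
    _ ≤ II := h2.trans h1

lemma LL_hasDerivAt {t : ℝ} (ht : 1 ≤ t) :
    HasDerivAt LL ((Real.cos (Real.sqrt t) * (1 / (2 * Real.sqrt t))) * t
      + (3 + Real.sin (Real.sqrt t)) * 1) t := by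
  have h1 : HasDerivAt Real.sqrt (1 / (2 * Real.sqrt t)) t :=
    Real.hasDerivAt_sqrt (by positivity)
  have h2 : HasDerivAt (fun s => Real.sin (Real.sqrt s))
      (Real.cos (Real.sqrt t) * (1 / (2 * Real.sqrt t))) t :=
    (Real.hasDerivAt_sin _).comp t h1
  have h3 : HasDerivAt (fun s => 3 + Real.sin (Real.sqrt s))
      (Real.cos (Real.sqrt t) * (1 / (2 * Real.sqrt t))) t := by
    simpa using h2.const_add 3
  exact h3.mul (hasDerivAt_id t)

lemma LL_lip {t₁ t₂ : ℝ} (h1 : 1 ≤ t₁) (h12 : t₁ ≤ t₂) :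
    |LL t₂ - LL t₁| ≤ 5 * Real.sqrt t₂ * (t₂ - t₁) := by
  have key : ‖LL t₂ - LL t₁‖ ≤ (5 * Real.sqrt t₂) * ‖t₂ - t₁‖ := by
    refine (convex_Icc t₁ t₂).norm_image_sub_le_of_norm_hasDerivWithin_le
      (f' := fun t => (Real.cos (Real.sqrt t) * (1 / (2 * Real.sqrt t))) * t
        + (3 + Real.sin (Real.sqrt t)) * 1)
      (fun t htt => (LL_hasDerivAt (h1.trans htt.1)).hasDerivWithinAt)
      (fun t htt => ?_) (left_mem_Icc.2 h12) (right_mem_Icc.2 h12)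
    have ht1 : (1:ℝ) ≤ t := h1.trans htt.1
    have ht0 : (0:ℝ) < t := by linarith
    have hst : Real.sqrt t * Real.sqrt t = t := Real.mul_self_sqrt ht0.le
    have hs1 : (1:ℝ) ≤ Real.sqrt t := by
      rw [show (1:ℝ) = Real.sqrt 1 by simp]; exact Real.sqrt_le_sqrt ht1
    have hs2 : Real.sqrt t ≤ Real.sqrt t₂ := Real.sqrt_le_sqrt htt.2
    have hcos : |Real.cos (Real.sqrt t)| ≤ 1 := Real.abs_cos_le_one _
    have hsin : |Real.sin (Real.sqrt t)| ≤ 1 := Real.abs_sin_le_one _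
    rw [Real.norm_eq_abs]
    have e1 : |(Real.cos (Real.sqrt t) * (1 / (2 * Real.sqrt t))) * t| ≤ Real.sqrt t / 2 := by
      rw [abs_mul, abs_mul, abs_of_pos ht0, abs_of_pos (show (0:ℝ) < 1/(2*Real.sqrt t) by positivity)]
      have : (1 / (2 * Real.sqrt t)) * t = Real.sqrt t / 2 := by
        field_simp
        nlinarith [hst]
      nlinarith [abs_nonneg (Real.cos (Real.sqrt t)), mul_le_of_le_one_left
        (show (0:ℝ) ≤ (1 / (2 * Real.sqrt t)) * t by positivity) hcos]
    have e2 : |(3 + Real.sin (Real.sqrt t)) * 1| ≤ 4 := by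
      rw [mul_one]
      have := abs_le.1 hsin
      rw [abs_le]; constructor <;> linarith [this.1, this.2]
    calc |(Real.cos (Real.sqrt t) * (1 / (2 * Real.sqrt t))) * t + (3 + Real.sin (Real.sqrt t)) * 1|
        ≤ |(Real.cos (Real.sqrt t) * (1 / (2 * Real.sqrt t))) * t| + |(3 + Real.sin (Real.sqrt t)) * 1| := abs_add_le _ _
      _ ≤ Real.sqrt t / 2 + 4 := by linarith
      _ ≤ 5 * Real.sqrt t₂ := by nlinarith [hs1.trans hs2, hs2, Real.sqrt_nonneg t]
  rw [Real.norm_eq_abs, Real.norm_eq_abs, abs_of_nonneg (by linarith : (0:ℝ) ≤ t₂ - t₁)] at key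
  linarith



lemma one_le_log {x : ℝ} (hx : Real.exp 1 ≤ x) : 1 ≤ Real.log x :=
  (Real.le_log_iff_exp_le (lt_of_lt_of_le (Real.exp_pos 1) hx)).2 hx

lemma one_le_of_exp_le {x : ℝ} (hx : Real.exp 1 ≤ x) : 1 ≤ x :=
  le_trans (by nlinarith [Real.add_one_le_exp (1:ℝ)]) hx

lemma eta_nonneg {x y η : ℝ} (hx : Real.exp 1 ≤ x) (hy : Real.exp 1 ≤ y)
    (h1 : 5 * Real.sqrt (Real.log x) * (Real.log x - Real.log y) ≤ η)
    (h2 : 5 * Real.sqrt (Real.log y) * (Real.log y - Real.log x) ≤ η) : 0 ≤ η := by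
  rcases le_total (Real.log x) (Real.log y) with h | h
  · have h0 : 0 ≤ 5 * Real.sqrt (Real.log y) * (Real.log y - Real.log x) := by
      nlinarith [Real.sqrt_nonneg (Real.log y)]
    linarith
  · have h0 : 0 ≤ 5 * Real.sqrt (Real.log x) * (Real.log x - Real.log y) := by
      nlinarith [Real.sqrt_nonneg (Real.log x)]
    linarith

lemma ratio_bound {x y η : ℝ} (hx : Real.exp 1 ≤ x) (hy : Real.exp 1 ≤ y)
    (h1 : 5 * Real.sqrt (Real.log x) * (Real.log x - Real.log y) ≤ η)
    (h2 : 5 * Real.sqrt (Real.log y) * (Real.log y - Real.log x) ≤ η) :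
    f0 y ≤ Real.exp η * f0 x := by
  rw [f0_of_one_le (one_le_of_exp_le hx), f0_of_one_le (one_le_of_exp_le hy), ← Real.exp_add]
  refine Real.exp_le_exp.2 ?_
  have hlx : 1 ≤ Real.log x := one_le_log hx
  have hly : 1 ≤ Real.log y := one_le_log hy
  rcases le_total (Real.log x) (Real.log y) with h | h
  · have := LL_lip hlx h
    have := abs_le.1 this
    linarith [h2, this.2, this.1]
  · have := LL_lip hly h
    have := abs_le.1 this
    linarith [h1, this.2, this.1]

lemma abs_sub_bound {x y η : ℝ} (hx : Real.exp 1 ≤ x) (hy : Real.exp 1 ≤ y)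
    (h1 : 5 * Real.sqrt (Real.log x) * (Real.log x - Real.log y) ≤ η)
    (h2 : 5 * Real.sqrt (Real.log y) * (Real.log y - Real.log x) ≤ η) :
    |f0 y - f0 x| ≤ (Real.exp η - 1) * f0 x := by
  have hxy := ratio_bound hx hy h1 h2
  have hyx := ratio_bound hy hx h2 h1
  have hη := eta_nonneg hx hy h1 h2
  have hfx := f0_nonneg x
  have hfy := f0_nonneg y
  have he1 : 1 ≤ Real.exp η := Real.one_le_exp hη
  have hee : Real.exp η * Real.exp (-η) = 1 := by rw [← Real.exp_add]; simp
  have hen : 0 < Real.exp (-η) := Real.exp_pos _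
  rw [abs_le]
  constructor
  · -- f0 x - f0 y ≤ (exp η - 1) f0 x, i.e. (2 - exp η) f0 x ≤ f0 y
    have h3 : Real.exp (-η) * f0 x ≤ f0 y := by nlinarith
    nlinarith [sq_nonneg (Real.exp η - 1), Real.exp_pos η]
  · nlinarith

lemma tail_bound {A : ℝ} (hA : 1 ≤ A) : ∫ u in Ioi A, f0 u ≤ A⁻¹ := by
  have hA0 : (0:ℝ) < A := by linarith
  have h1 : ∫ u in Ioi A, f0 u ≤ ∫ u in Ioi A, u ^ (-2 : ℝ) := by
    refine setIntegral_mono_on integrable_f0.integrableOn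
      (integrableOn_Ioi_rpow_of_lt (by norm_num) hA0) measurableSet_Ioi (fun u hu => ?_)
    exact f0_le_rpow (hA.trans (le_of_lt hu))
  have h2 : ∫ u in Ioi A, u ^ (-2 : ℝ) = -A ^ ((-2:ℝ) + 1) / ((-2:ℝ) + 1) :=
    integral_Ioi_rpow_of_lt (by norm_num) hA0
  rw [h2] at h1
  have : -A ^ ((-2:ℝ) + 1) / ((-2:ℝ) + 1) = A⁻¹ := by
    norm_num
    rw [Real.rpow_neg_one]
  linarith [h1, this ▸ h1]

lemma ae_ne_one : ∀ᵐ u : ℝ, u ≠ 1 := by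
  rw [ae_iff]
  simpa using measure_singleton (1:ℝ)

lemma I_sub_J {A : ℝ} (hA : 1 ≤ A) :
    II - ∫ u in Ioc 1 A, f0 u = ∫ u in Ioi A, f0 u := by
  have hsplit : (∫ u in Iic A, f0 u) + ∫ u in Ioi A, f0 u = II := by
    have := integral_add_compl (measurableSet_Iic (a := A)) integrable_f0
    rwa [compl_Iic] at this
  have hIic1 : ∫ u in Iic (1:ℝ), f0 u = 0 := by
    have : ∀ᵐ u : ℝ, u ∈ Iic (1:ℝ) → f0 u = 0 := by
      filter_upwards [ae_ne_one] with u hu hmem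
      have : u < 1 := lt_of_le_of_ne hmem hu
      unfold f0; rw [if_neg (not_le.2 this)]
    calc ∫ u in Iic (1:ℝ), f0 u = ∫ u in Iic (1:ℝ), (0:ℝ) :=
          setIntegral_congr_ae measurableSet_Iic this
      _ = 0 := by simp
  have hunion : ∫ u in Iic A, f0 u = (∫ u in Iic (1:ℝ), f0 u) + ∫ u in Ioc 1 A, f0 u := by
    rw [← setIntegral_union (Iic_disjoint_Ioc le_rfl) measurableSet_Ioc
      integrable_f0.integrableOn integrable_f0.integrableOn, Iic_union_Ioc_eq_Iic hA]
  rw [hunion, hIic1, zero_add] at hsplit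
  linarith

lemma J_nonneg {A : ℝ} : 0 ≤ ∫ u in Ioc 1 A, f0 u :=
  setIntegral_nonneg measurableSet_Ioc (fun u _ => f0_nonneg u)

lemma J_le_I {A : ℝ} : ∫ u in Ioc 1 A, f0 u ≤ II :=
  setIntegral_le_integral integrable_f0 (ae_of_all _ f0_nonneg)

lemma tail_nonneg {A : ℝ} : 0 ≤ ∫ u in Ioi A, f0 u :=
  setIntegral_nonneg measurableSet_Ioi (fun u _ => f0_nonneg u)



set_option maxHeartbeats 2000000 in
lemma main_est {x : ℝ} (hx0 : 0 < x) (hT : 400 ≤ Real.log x) :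
    |conv f0 f0 x / f0 x - 2 * II| ≤
      2 * II * (Real.exp (10 * Real.sqrt (Real.log x) * Real.exp (6 * Real.sqrt (Real.log x)) / x) - 1)
      + 2 * Real.exp (5 * Real.sqrt (Real.log x)) / Real.exp (6 * Real.sqrt (Real.log x))
      + 2 / Real.exp (6 * Real.sqrt (Real.log x)) := by
  set T : ℝ := Real.log x with hTdef
  set sq : ℝ := Real.sqrt T with hsqdef
  have hT0 : (0:ℝ) ≤ T := by linarith
  have hsq20 : (20:ℝ) ≤ sq := by
    rw [hsqdef, show (20:ℝ) = Real.sqrt 400 by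
      rw [show (400:ℝ) = 20^2 by norm_num, Real.sqrt_sq (by norm_num)]]
    exact Real.sqrt_le_sqrt hT
  have hsqsq : sq * sq = T := Real.mul_self_sqrt hT0
  have hsq_le : 20 * sq ≤ T := by nlinarith
  have hxT : x = Real.exp T := (Real.exp_log hx0).symm
  set A : ℝ := Real.exp (6 * sq) with hAdef
  have hA_pos : 0 < A := Real.exp_pos _
  have hA1 : 1 ≤ A := Real.one_le_exp (by nlinarith)
  have hA2 : 2 * A ≤ x := by
    rw [hxT]
    calc 2 * A ≤ Real.exp 1 * Real.exp (6 * sq) := by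
          nlinarith [Real.add_one_le_exp (1:ℝ), Real.exp_pos (6*sq)]
      _ = Real.exp (1 + 6 * sq) := (Real.exp_add _ _).symm
      _ ≤ Real.exp T := Real.exp_le_exp.2 (by nlinarith)
  have hex2 : Real.exp 1 * 2 ≤ x := by
    rw [hxT]
    calc Real.exp 1 * 2 ≤ Real.exp 1 * Real.exp 1 := by
          nlinarith [Real.add_one_le_exp (1:ℝ), Real.exp_pos 1]
      _ = Real.exp (1 + 1) := (Real.exp_add _ _).symm
      _ ≤ Real.exp T := Real.exp_le_exp.2 (by norm_num; linarith)
  have hex : Real.exp 1 ≤ x := by nlinarith [Real.exp_pos 1]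
  have h1A : (1:ℝ) ≤ A := hA1
  have h1x1 : (1:ℝ) ≤ x - 1 := by nlinarith [Real.exp_pos 1, Real.add_one_le_exp (1:ℝ)]
  have hAxA : A ≤ x - A := by linarith
  have hxA1 : x - A ≤ x - 1 := by linarith
  set η : ℝ := 10 * sq * A / x with hηdef
  have hη_nonneg : 0 ≤ η := by
    have : (0:ℝ) ≤ sq := by linarith
    positivity
  set r : ℝ := f0 x with hrdef
  have hr : 0 < r := f0_pos (by nlinarith [Real.exp_pos 1, Real.add_one_le_exp (1:ℝ)])
  set Fx : ℝ → ℝ := fun u => f0 (x - u) * f0 u with hFxdef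
  have hFmeas : Measurable Fx :=
    (measurable_f0.comp (measurable_const.sub measurable_id)).mul measurable_f0
  have hFint : Integrable Fx := by
    refine Integrable.bdd_mul integrable_f0
      (measurable_f0.comp (measurable_const.sub measurable_id)).aestronglyMeasurable (c := 1) (ae_of_all _ fun u => ?_)
    rw [Real.norm_of_nonneg (f0_nonneg _)]
    exact f0_le_one _
  have hFnonneg : ∀ u, 0 ≤ Fx u := fun u => mul_nonneg (f0_nonneg _) (f0_nonneg _)
  -- step 1 : conv = interval integral
  have step1 : conv f0 f0 x = ∫ u in (1:ℝ)..(x-1), Fx u := by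
    rw [intervalIntegral.integral_of_le (le_trans h1A (hAxA.trans hxA1)), ← integral_Icc_eq_integral_Ioc]
    rw [setIntegral_eq_integral_of_forall_compl_eq_zero (fun u hu => ?_)]
    · rfl
    · rw [mem_Icc, not_and_or] at hu
      rcases hu with hu | hu
      · have : f0 u = 0 := by unfold f0; rw [if_neg hu]
        simp [hFxdef, this]
      · push_neg at hu
        have : f0 (x - u) = 0 := by unfold f0; rw [if_neg (by push_neg; linarith)]
        simp [hFxdef, this]
  -- step 2 : splitting
  have step2 : ∫ u in (1:ℝ)..(x-1), Fx u =
      (∫ u in (1:ℝ)..A, Fx u) + (∫ u in A..(x-A), Fx u) + (∫ u in (x-A)..(x-1), Fx u) := by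
    rw [intervalIntegral.integral_add_adjacent_intervals hFint.intervalIntegrable
      hFint.intervalIntegrable,
      intervalIntegral.integral_add_adjacent_intervals hFint.intervalIntegrable
      hFint.intervalIntegrable]
  -- step 3 : third piece equals first piece
  have step3 : ∫ u in (x-A)..(x-1), Fx u = ∫ u in (1:ℝ)..A, Fx u := by
    have e0 : ∀ u : ℝ, Fx u = Fx (x - u) := by
      intro u
      simp only [hFxdef]
      rw [show x - (x - u) = u by ring, mul_comm]
    have e1 : (∫ u in (x-A)..(x-1), Fx (x - u)) = ∫ u in (x-(x-1))..(x-(x-A)), Fx u :=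
      intervalIntegral.integral_comp_sub_left Fx x
    rw [show x-(x-1) = (1:ℝ) by ring, show x-(x-A) = A by ring] at e1
    calc ∫ u in (x-A)..(x-1), Fx u = ∫ u in (x-A)..(x-1), Fx (x - u) := by
          refine intervalIntegral.integral_congr (fun u _ => e0 u)
      _ = ∫ u in (1:ℝ)..A, Fx u := e1
  set J : ℝ := ∫ u in Ioc 1 A, f0 u with hJdef
  have hJ_int : ∫ u in (1:ℝ)..A, f0 u = J := intervalIntegral.integral_of_le h1A
  -- edge estimate
  have hedge : |(∫ u in (1:ℝ)..A, Fx u) - r * J| ≤ (Real.exp η - 1) * r * II := by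
    have hconst : (∫ u in (1:ℝ)..A, r * f0 u) = r * J := by
      rw [intervalIntegral.integral_const_mul, hJ_int]
    rw [← hconst, ← intervalIntegral.integral_sub hFint.intervalIntegrable
      ((integrable_f0.const_mul r).intervalIntegrable)]
    have habs : |∫ u in (1:ℝ)..A, (Fx u - r * f0 u)| ≤
        ∫ u in (1:ℝ)..A, |Fx u - r * f0 u| :=
      intervalIntegral.abs_integral_le_integral_abs h1A
    have hptwise : ∀ u ∈ Icc (1:ℝ) A, |Fx u - r * f0 u| ≤ ((Real.exp η - 1) * r) * f0 u := by
      intro u hu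
      have hu1 : (1:ℝ) ≤ u := hu.1
      have huA : u ≤ A := hu.2
      have hxu_pos : Real.exp 1 ≤ x - u := by nlinarith
      have hxu0 : (0:ℝ) < x - u := lt_of_lt_of_le (Real.exp_pos 1) hxu_pos
      have hlog_le : Real.log (x - u) ≤ Real.log x := Real.log_le_log hxu0 (by linarith)
      have hcond1 : 5 * Real.sqrt (Real.log x) * (Real.log x - Real.log (x - u)) ≤ η := by
        have hdiff : Real.log x - Real.log (x - u) ≤ 2 * A / x := by
          have hlogdiv : Real.log x - Real.log (x - u) = Real.log (x / (x - u)) := by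
            rw [Real.log_div (by linarith) (by linarith)]
          rw [hlogdiv]
          have h2 : Real.log (x / (x-u)) ≤ x / (x-u) - 1 :=
            Real.log_le_sub_one_of_pos (by positivity)
          have h3 : x / (x - u) - 1 = u / (x - u) := by field_simp; ring
          have h4 : u / (x - u) ≤ A / (x - A) :=
            div_le_div₀ (by linarith) huA (by linarith) (by linarith)
          have h5 : A / (x - A) ≤ 2 * A / x := by
            rw [div_le_div_iff₀ (by linarith) hx0]
            nlinarith
          linarith
        have hsqT : Real.sqrt (Real.log x) = sq := by rw [hsqdef, hTdef]
        rw [hsqT, hηdef]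
        have hsq0 : (0:ℝ) ≤ sq := by linarith
        calc 5 * sq * (Real.log x - Real.log (x-u)) ≤ 5 * sq * (2 * A / x) := by
              apply mul_le_mul_of_nonneg_left hdiff (by positivity)
          _ = 10 * sq * A / x := by ring
      have hcond2 : 5 * Real.sqrt (Real.log (x - u)) * (Real.log (x - u) - Real.log x) ≤ η := by
        have : 5 * Real.sqrt (Real.log (x-u)) * (Real.log (x-u) - Real.log x) ≤ 0 := by
          nlinarith [Real.sqrt_nonneg (Real.log (x-u))]
        linarith
      have := abs_sub_bound hex hxu_pos hcond1 hcond2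
      calc |Fx u - r * f0 u| = |f0 (x-u) - r| * f0 u := by
            rw [hFxdef]
            rw [show f0 (x-u) * f0 u - r * f0 u = (f0 (x-u) - r) * f0 u by ring,
              abs_mul, abs_of_nonneg (f0_nonneg u)]
        _ ≤ ((Real.exp η - 1) * r) * f0 u := by
            apply mul_le_mul_of_nonneg_right _ (f0_nonneg u)
            rw [hrdef]
            exact this
    have hmono : (∫ u in (1:ℝ)..A, |Fx u - r * f0 u|) ≤
        ∫ u in (1:ℝ)..A, ((Real.exp η - 1) * r) * f0 u := by
      refine intervalIntegral.integral_mono_on h1A ?_ ?_ hptwise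
      · exact (hFint.sub (integrable_f0.const_mul r)).abs.intervalIntegrable
      · exact (integrable_f0.const_mul _).intervalIntegrable
    have hval : (∫ u in (1:ℝ)..A, ((Real.exp η - 1) * r) * f0 u) = ((Real.exp η - 1) * r) * J := by
      rw [intervalIntegral.integral_const_mul, hJ_int]
    have hJII : ((Real.exp η - 1) * r) * J ≤ ((Real.exp η - 1) * r) * II := by
      apply mul_le_mul_of_nonneg_left J_le_I
      have := Real.one_le_exp hη_nonneg
      nlinarith [hr]
    calc |∫ u in (1:ℝ)..A, (Fx u - r * f0 u)| ≤ _ := habs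
      _ ≤ ((Real.exp η - 1) * r) * J := le_of_le_of_eq hmono hval
      _ ≤ ((Real.exp η - 1) * r) * II := hJII
      _ = (Real.exp η - 1) * r * II := by ring
  -- middle estimate
  have hmid_nonneg : 0 ≤ ∫ u in A..(x-A), Fx u :=
    intervalIntegral.integral_nonneg hAxA (fun u _ => hFnonneg u)
  have hmid : (∫ u in A..(x-A), Fx u) ≤ Real.exp (5 * sq) * r * (2 * A⁻¹) := by
    have hptw : ∀ u ∈ Icc A (x - A), Fx u ≤ (Real.exp (5 * sq) * r) * (f0 u + f0 (x - u)) := by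
      intro u hu
      have huA : A ≤ u := hu.1
      have huxA : u ≤ x - A := hu.2
      have hu1 : (1:ℝ) ≤ u := le_trans h1A huA
      have hxu1 : (1:ℝ) ≤ x - u := by linarith
      have hsqT : Real.sqrt (Real.log x) = sq := rfl
      have hsq0 : (0:ℝ) ≤ sq := by linarith
      rcases le_total u (x/2) with hc | hc
      · -- x - u ≥ x/2 : f0 (x-u) ≤ exp (5 sq) * f0 x
        have hxu_e : Real.exp 1 ≤ x - u := by nlinarith
        have hxu0 : (0:ℝ) < x - u := by nlinarith [Real.exp_pos 1]
        have hcond1 : 5 * Real.sqrt (Real.log x) * (Real.log x - Real.log (x-u)) ≤ 5 * sq := by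
          rw [hsqT]
          have hdiff : Real.log x - Real.log (x-u) ≤ 1 := by
            have hlogdiv : Real.log x - Real.log (x - u) = Real.log (x / (x - u)) := by
              rw [Real.log_div (by linarith) (by linarith)]
            rw [hlogdiv]
            have h2 : Real.log (x / (x-u)) ≤ x / (x-u) - 1 :=
              Real.log_le_sub_one_of_pos (by positivity)
            have h3 : x / (x - u) ≤ 2 := by
              rw [div_le_iff₀ hxu0]; linarith
            linarith
          nlinarith
        have hcond2 : 5 * Real.sqrt (Real.log (x-u)) * (Real.log (x-u) - Real.log x) ≤ 5 * sq := by
          have hlog_le : Real.log (x - u) ≤ Real.log x := Real.log_le_log hxu0 (by linarith)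
          nlinarith [Real.sqrt_nonneg (Real.log (x-u))]
        have hbd := ratio_bound hex hxu_e hcond1 hcond2
        have : Fx u ≤ (Real.exp (5*sq) * r) * f0 u := by
          rw [hFxdef]
          exact mul_le_mul_of_nonneg_right hbd (f0_nonneg u)
        nlinarith [f0_nonneg (x - u), mul_nonneg (mul_nonneg (Real.exp_pos (5*sq)).le hr.le) (f0_nonneg (x-u))]
      · -- u ≥ x/2 : f0 u ≤ exp (5 sq) * f0 x
        have hu_e : Real.exp 1 ≤ u := by nlinarith
        have hu0 : (0:ℝ) < u := by nlinarith [Real.exp_pos 1]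
        have hcond1 : 5 * Real.sqrt (Real.log x) * (Real.log x - Real.log u) ≤ 5 * sq := by
          rw [hsqT]
          have hdiff : Real.log x - Real.log u ≤ 1 := by
            have hlogdiv : Real.log x - Real.log u = Real.log (x / u) := by
              rw [Real.log_div (by linarith) (by linarith)]
            rw [hlogdiv]
            have h2 : Real.log (x / u) ≤ x / u - 1 :=
              Real.log_le_sub_one_of_pos (by positivity)
            have h3 : x / u ≤ 2 := by
              rw [div_le_iff₀ hu0]; linarith
            linarith
          nlinarith
        have hcond2 : 5 * Real.sqrt (Real.log u) * (Real.log u - Real.log x) ≤ 5 * sq := by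
          have hlog_le : Real.log u ≤ Real.log x := Real.log_le_log hu0 (by linarith)
          nlinarith [Real.sqrt_nonneg (Real.log u)]
        have hbd := ratio_bound hex hu_e hcond1 hcond2
        have : Fx u ≤ f0 (x - u) * ((Real.exp (5*sq) * r)) := by
          rw [hFxdef]
          exact mul_le_mul_of_nonneg_left hbd (f0_nonneg (x-u))
        nlinarith [f0_nonneg u, mul_nonneg (mul_nonneg (Real.exp_pos (5*sq)).le hr.le) (f0_nonneg u)]
    have hint1 : (∫ u in A..(x-A), Fx u) ≤
        ∫ u in A..(x-A), (Real.exp (5*sq) * r) * (f0 u + f0 (x - u)) := by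
      refine intervalIntegral.integral_mono_on hAxA hFint.intervalIntegrable ?_ hptw
      exact ((integrable_f0.add (integrable_f0.comp_sub_left x)).const_mul _).intervalIntegrable
    have hsplit2 : (∫ u in A..(x-A), (Real.exp (5*sq) * r) * (f0 u + f0 (x - u)))
        = (Real.exp (5*sq) * r) * ((∫ u in A..(x-A), f0 u) + ∫ u in A..(x-A), f0 (x - u)) := by
      rw [intervalIntegral.integral_const_mul, intervalIntegral.integral_add
        integrable_f0.intervalIntegrable (integrable_f0.comp_sub_left x).intervalIntegrable]
    have hswap : (∫ u in A..(x-A), f0 (x - u)) = ∫ u in A..(x-A), f0 u := by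
      have h := intervalIntegral.integral_comp_sub_left (a := A) (b := x - A) f0 x
      rw [show x - (x - A) = A by ring] at h
      exact h
    have hIoc_le : (∫ u in A..(x-A), f0 u) ≤ A⁻¹ := by
      rw [intervalIntegral.integral_of_le hAxA]
      refine le_trans ?_ (tail_bound h1A)
      exact setIntegral_mono_set integrable_f0.integrableOn (ae_of_all _ f0_nonneg)
        (Ioc_subset_Ioi_self).eventuallyLE
    have hIoc0 : 0 ≤ ∫ u in A..(x-A), f0 u :=
      intervalIntegral.integral_nonneg hAxA (fun u _ => f0_nonneg u)
    calc (∫ u in A..(x-A), Fx u) ≤ _ := hint1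
      _ = (Real.exp (5*sq) * r) * (2 * ∫ u in A..(x-A), f0 u) := by rw [hsplit2, hswap]; ring
      _ ≤ Real.exp (5 * sq) * r * (2 * A⁻¹) := by
          apply mul_le_mul_of_nonneg_left _ (by positivity)
          linarith
  -- assembly
  have hIJ := I_sub_J (A := A) h1A
  have htail := tail_bound (A := A) h1A
  have htail0 := tail_nonneg (A := A)
  have hJb1 : II - J ≤ A⁻¹ := by rw [hJdef, hIJ]; exact htail
  have hJb0 : 0 ≤ II - J := by rw [hJdef, hIJ]; exact htail0
  set P1 : ℝ := ∫ u in (1:ℝ)..A, Fx u with hP1def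
  set P2 : ℝ := ∫ u in A..(x-A), Fx u with hP2def
  have hconv : conv f0 f0 x = 2 * P1 + P2 := by
    show (∫ u, f0 (x - u) * f0 u) = 2 * P1 + P2
    have : (∫ u, f0 (x - u) * f0 u) = ∫ u, Fx u := rfl
    rw [this, show (∫ u, Fx u) = conv f0 f0 x from rfl, step1, step2, step3]; ring
  have key : |2 * P1 + P2 - 2 * II * r| ≤
      (2 * II * (Real.exp η - 1) + 2 * Real.exp (5 * sq) * A⁻¹ + 2 * A⁻¹) * r := by
    have b1 := abs_le.1 hedge
    have c1 : r * (II - J) ≤ r * A⁻¹ := mul_le_mul_of_nonneg_left hJb1 hr.le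
    have c2 : 0 ≤ r * (II - J) := mul_nonneg hr.le hJb0
    rw [abs_le]
    constructor
    · nlinarith [b1.1, b1.2, hmid, hmid_nonneg, c1, c2]
    · nlinarith [b1.1, b1.2, hmid, hmid_nonneg, c1, c2]
  have hfinal : |(2 * P1 + P2) / r - 2 * II| ≤
      2 * II * (Real.exp η - 1) + 2 * Real.exp (5 * sq) * A⁻¹ + 2 * A⁻¹ := by
    rw [div_sub' hr.ne', abs_div, abs_of_pos hr, div_le_iff₀ hr,
      show (2 * P1 + P2 - r * (2 * II)) = 2 * P1 + P2 - 2 * II * r by ring]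
    exact key
  rw [hconv]
  calc |(2 * P1 + P2) / r - 2 * II| ≤
      2 * II * (Real.exp η - 1) + 2 * Real.exp (5 * sq) * A⁻¹ + 2 * A⁻¹ := hfinal
    _ = 2 * II * (Real.exp η - 1) + 2 * Real.exp (5 * sq) / A + 2 / A := by
        rw [div_eq_mul_inv, div_eq_mul_inv]



lemma sqrt_tendsto_atTop : Tendsto Real.sqrt atTop atTop := by
  rw [tendsto_atTop_atTop]
  intro b
  refine ⟨(max b 0)^2, fun a ha => le_trans (le_max_left b 0) ?_⟩
  rw [← Real.sqrt_sq (le_max_right b 0)]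
  exact Real.sqrt_le_sqrt ha

lemma sl_tendsto : Tendsto (fun x : ℝ => Real.sqrt (Real.log x)) atTop atTop :=
  sqrt_tendsto_atTop.comp Real.tendsto_log_atTop

lemma expA_tendsto : Tendsto (fun x : ℝ => Real.exp (6 * Real.sqrt (Real.log x))) atTop atTop :=
  Real.tendsto_exp_atTop.comp (sl_tendsto.const_mul_atTop (by norm_num : (0:ℝ) < 6))

lemma piece3 : Tendsto (fun x : ℝ => 2 / Real.exp (6 * Real.sqrt (Real.log x))) atTop (nhds 0) := by
  have := expA_tendsto.inv_tendsto_atTop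
  have h := this.const_mul (2:ℝ)
  simpa [div_eq_mul_inv] using h

lemma piece2 : Tendsto (fun x : ℝ =>
    2 * Real.exp (5 * Real.sqrt (Real.log x)) / Real.exp (6 * Real.sqrt (Real.log x)))
    atTop (nhds 0) := by
  have heq : ∀ x : ℝ, 2 * Real.exp (5 * Real.sqrt (Real.log x)) / Real.exp (6 * Real.sqrt (Real.log x))
      = 2 * Real.exp (-(Real.sqrt (Real.log x))) := by
    intro x
    rw [mul_div_assoc, ← Real.exp_sub]
    ring_nf
  simp only [heq]
  have h1 : Tendsto (fun x : ℝ => Real.exp (-(Real.sqrt (Real.log x)))) atTop (nhds 0) :=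
    Real.tendsto_exp_neg_atTop_nhds_zero.comp sl_tendsto
  simpa using h1.const_mul (2:ℝ)

lemma g_tendsto : Tendsto (fun T : ℝ => 10 * Real.sqrt T * Real.exp (6 * Real.sqrt T - T))
    atTop (nhds 0) := by
  have hgT : Tendsto (fun T : ℝ => 10 * T * Real.exp (-(T/2))) atTop (nhds 0) := by
    have hcomp : Tendsto (fun T : ℝ => T / 2) atTop atTop :=
      tendsto_id.atTop_div_const (by norm_num)
    have hbase : Tendsto (fun y : ℝ => 20 * (y ^ 1 * Real.exp (-y))) atTop (nhds (20 * 0)) :=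
      (Real.tendsto_pow_mul_exp_neg_atTop_nhds_zero 1).const_mul 20
    have := hbase.comp hcomp
    simp only [mul_zero] at this
    refine this.congr (fun T => ?_)
    simp only [Function.comp_apply, pow_one]
    ring
  refine squeeze_zero' ?_ ?_ hgT
  · filter_upwards [eventually_ge_atTop (0:ℝ)] with T hT
    positivity
  · filter_upwards [eventually_ge_atTop (400:ℝ)] with T hT
    have hT0 : (0:ℝ) ≤ T := by linarith
    have hsq : Real.sqrt T * Real.sqrt T = T := Real.mul_self_sqrt hT0
    have hsq20 : (20:ℝ) ≤ Real.sqrt T := by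
      rw [show (20:ℝ) = Real.sqrt 400 by
        rw [show (400:ℝ) = 20^2 by norm_num, Real.sqrt_sq (by norm_num)]]
      exact Real.sqrt_le_sqrt hT
    have h1 : Real.sqrt T ≤ T := by nlinarith
    have h2 : 6 * Real.sqrt T - T ≤ -(T/2) := by nlinarith
    have h3 : Real.exp (6 * Real.sqrt T - T) ≤ Real.exp (-(T/2)) := Real.exp_le_exp.2 h2
    have h4 : (0:ℝ) ≤ Real.sqrt T := Real.sqrt_nonneg T
    nlinarith [Real.exp_pos (6 * Real.sqrt T - T), Real.exp_pos (-(T/2))]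

lemma eta_tendsto : Tendsto (fun x : ℝ =>
    10 * Real.sqrt (Real.log x) * Real.exp (6 * Real.sqrt (Real.log x)) / x) atTop (nhds 0) := by
  have hcomp := g_tendsto.comp Real.tendsto_log_atTop
  refine Tendsto.congr' ?_ hcomp
  filter_upwards [eventually_gt_atTop (0:ℝ)] with x hx
  simp only [Function.comp_apply]
  rw [Real.exp_sub, Real.exp_log hx]
  ring

lemma piece1 : Tendsto (fun x : ℝ => 2 * II *
    (Real.exp (10 * Real.sqrt (Real.log x) * Real.exp (6 * Real.sqrt (Real.log x)) / x) - 1))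
    atTop (nhds 0) := by
  have h1 : Tendsto (fun x : ℝ =>
      Real.exp (10 * Real.sqrt (Real.log x) * Real.exp (6 * Real.sqrt (Real.log x)) / x))
      atTop (nhds 1) := by
    have := (Real.continuous_exp.tendsto 0).comp eta_tendsto
    rw [Real.exp_zero] at this; exact this
  have h2 := (h1.sub_const 1).const_mul (2 * II)
  simpa using h2

lemma bound_tendsto : Tendsto (fun x : ℝ =>
    2 * II * (Real.exp (10 * Real.sqrt (Real.log x) * Real.exp (6 * Real.sqrt (Real.log x)) / x) - 1)
    + 2 * Real.exp (5 * Real.sqrt (Real.log x)) / Real.exp (6 * Real.sqrt (Real.log x))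
    + 2 / Real.exp (6 * Real.sqrt (Real.log x))) atTop (nhds 0) := by
  have := (piece1.add piece2).add piece3
  simpa using this

lemma subexp_f0 : Tendsto (fun x => conv f0 f0 x / f0 x) atTop (nhds (2 * II)) := by
  refine tendsto_iff_dist_tendsto_zero.2 ?_
  simp only [Real.dist_eq]
  refine squeeze_zero' ?_ ?_ bound_tendsto
  · exact Eventually.of_forall (fun x => abs_nonneg _)
  · filter_upwards [eventually_gt_atTop (0:ℝ),
      Real.tendsto_log_atTop.eventually_ge_atTop (400:ℝ)] with x hx hT
    exact main_est hx hT



lemma eta_a_tendsto (a : ℝ) : Tendsto (fun x : ℝ =>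
    10 * (|a| + 1) * Real.sqrt (Real.log x + 1) / x) atTop (nhds 0) := by
  have hb : Tendsto (fun x : ℝ => 10 * (|a| + 1) / Real.sqrt x) atTop (nhds 0) := by
    have h := (sqrt_tendsto_atTop.inv_tendsto_atTop).const_mul (10 * (|a| + 1))
    simpa [div_eq_mul_inv] using h
  refine squeeze_zero' ?_ ?_ hb
  · filter_upwards [eventually_gt_atTop (0:ℝ)] with x hx
    positivity
  · filter_upwards [eventually_ge_atTop (1:ℝ)] with x hx
    have hx0 : (0:ℝ) < x := by linarith
    have hlog : Real.log x + 1 ≤ x := by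
      have := Real.log_le_sub_one_of_pos hx0
      linarith
    have h1 : Real.sqrt (Real.log x + 1) ≤ Real.sqrt x := Real.sqrt_le_sqrt hlog
    have hsx : Real.sqrt x * Real.sqrt x = x := Real.mul_self_sqrt hx0.le
    have hsx0 : (0:ℝ) < Real.sqrt x := Real.sqrt_pos.2 hx0
    rw [div_le_div_iff₀ hx0 hsx0]
    have ha0 : (0:ℝ) ≤ 10 * (|a| + 1) := by positivity
    nlinarith [mul_le_mul_of_nonneg_left (mul_le_mul_of_nonneg_right h1 hsx0.le) ha0]

set_option maxHeartbeats 2000000 in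
lemma longtail_f0 (a : ℝ) : Tendsto (fun x => f0 (x + a) / f0 x) atTop (nhds 1) := by
  set ηa : ℝ → ℝ := fun x => 10 * (|a| + 1) * Real.sqrt (Real.log x + 1) / x with hηa
  have hbnd : Tendsto (fun x => Real.exp (ηa x) - 1) atTop (nhds 0) := by
    have h1 : Tendsto (fun x => Real.exp (ηa x)) atTop (nhds 1) := by
      have := (Real.continuous_exp.tendsto 0).comp (eta_a_tendsto a)
      rw [Real.exp_zero] at this; exact this
    simpa using h1.sub_const 1
  refine tendsto_iff_dist_tendsto_zero.2 ?_
  simp only [Real.dist_eq]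
  refine squeeze_zero' (Eventually.of_forall fun x => abs_nonneg _) ?_ hbnd
  filter_upwards [eventually_ge_atTop (2 * |a| + 2 * Real.exp 1 + 2)] with x hx
  have habs := abs_nonneg a
  have hexp1 : (1:ℝ) ≤ Real.exp 1 := Real.one_le_exp zero_le_one
  have hax : |a| ≤ x / 2 := by linarith
  have haax : -|a| ≤ a ∧ a ≤ |a| := abs_le.1 le_rfl
  have hex : Real.exp 1 ≤ x := by linarith
  have hey : Real.exp 1 ≤ x + a := by linarith [haax.1]
  have hx0 : (0:ℝ) < x := by linarith
  have hxa0 : (0:ℝ) < x + a := by linarith [haax.1]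
  have hηa0 : 0 ≤ ηa x := by rw [hηa]; positivity
  have hsq_le : Real.sqrt (Real.log x) ≤ Real.sqrt (Real.log x + 1) :=
    Real.sqrt_le_sqrt (by linarith)
  have hsqy_le : Real.sqrt (Real.log (x + a)) ≤ Real.sqrt (Real.log x + 1) := by
    apply Real.sqrt_le_sqrt
    have h2x : x + a ≤ 2 * x := by linarith [haax.2]
    have := Real.log_le_log hxa0 h2x
    rw [Real.log_mul (by norm_num) hx0.ne'] at this
    have hlog2 : Real.log 2 ≤ 1 := by
      have := Real.log_le_sub_one_of_pos (show (0:ℝ) < 2 by norm_num); linarith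
    linarith
  have hcond1 : 5 * Real.sqrt (Real.log x) * (Real.log x - Real.log (x + a)) ≤ ηa x := by
    rcases le_or_gt 0 a with ha | ha
    · have hmono : Real.log x ≤ Real.log (x + a) := Real.log_le_log hx0 (by linarith)
      have h0 : 5 * Real.sqrt (Real.log x) * (Real.log x - Real.log (x+a)) ≤ 0 := by
        nlinarith [Real.sqrt_nonneg (Real.log x)]
      linarith
    · have hd : Real.log x - Real.log (x + a) ≤ 2 * |a| / x := by
        rw [show Real.log x - Real.log (x+a) = Real.log (x / (x+a)) from
          (Real.log_div hx0.ne' hxa0.ne').symm]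
        have h2 : Real.log (x / (x+a)) ≤ x / (x+a) - 1 :=
          Real.log_le_sub_one_of_pos (by positivity)
        have h3 : x / (x + a) - 1 = (-a) / (x + a) := by field_simp; ring
        have h4 : (-a) / (x + a) ≤ 2 * |a| / x := by
          rw [div_le_div_iff₀ hxa0 hx0]
          have hana : |a| = -a := abs_of_neg ha
          nlinarith [haax.1, hax]
        linarith
      rw [hηa]
      have hs0 : (0:ℝ) ≤ Real.sqrt (Real.log x + 1) := Real.sqrt_nonneg _
      have hkey : 5 * Real.sqrt (Real.log x) * (Real.log x - Real.log (x+a))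
          ≤ 5 * Real.sqrt (Real.log x + 1) * (2 * |a| / x) := by
        rcases le_or_gt 0 (Real.log x - Real.log (x+a)) with h | h
        · have e1 : 5 * Real.sqrt (Real.log x) * (Real.log x - Real.log (x+a))
              ≤ 5 * Real.sqrt (Real.log x + 1) * (Real.log x - Real.log (x+a)) := by
            nlinarith [Real.sqrt_nonneg (Real.log x)]
          have e2 := mul_le_mul_of_nonneg_left hd
            (show (0:ℝ) ≤ 5 * Real.sqrt (Real.log x + 1) by positivity)
          linarith
        · have : (0:ℝ) ≤ 5 * Real.sqrt (Real.log x + 1) * (2 * |a| / x) := by positivity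
          nlinarith [Real.sqrt_nonneg (Real.log x)]
      refine hkey.trans ?_
      rw [show 5 * Real.sqrt (Real.log x + 1) * (2 * |a| / x)
          = (10 * |a| * Real.sqrt (Real.log x + 1)) / x by ring]
      rw [div_le_div_iff₀ hx0 hx0]
      nlinarith [mul_nonneg hs0 hx0.le]
  have hcond2 : 5 * Real.sqrt (Real.log (x + a)) * (Real.log (x + a) - Real.log x) ≤ ηa x := by
    rcases le_or_gt a 0 with ha | ha
    · have hmono : Real.log (x + a) ≤ Real.log x := Real.log_le_log hxa0 (by linarith)
      have h0 : 5 * Real.sqrt (Real.log (x+a)) * (Real.log (x+a) - Real.log x) ≤ 0 := by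
        nlinarith [Real.sqrt_nonneg (Real.log (x+a))]
      linarith
    · have hd : Real.log (x + a) - Real.log x ≤ 2 * |a| / x := by
        rw [show Real.log (x+a) - Real.log x = Real.log ((x+a) / x) from
          (Real.log_div hxa0.ne' hx0.ne').symm]
        have h2 : Real.log ((x+a) / x) ≤ (x+a) / x - 1 :=
          Real.log_le_sub_one_of_pos (by positivity)
        have h3 : (x + a) / x - 1 = a / x := by field_simp; ring
        have h5 : a / x ≤ 2 * |a| / x := by
          rw [div_le_div_iff₀ hx0 hx0]
          nlinarith [haax.2, abs_nonneg a]
        linarith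
      rw [hηa]
      have hs0 : (0:ℝ) ≤ Real.sqrt (Real.log x + 1) := Real.sqrt_nonneg _
      have hkey : 5 * Real.sqrt (Real.log (x+a)) * (Real.log (x+a) - Real.log x)
          ≤ 5 * Real.sqrt (Real.log x + 1) * (2 * |a| / x) := by
        rcases le_or_gt 0 (Real.log (x+a) - Real.log x) with h | h
        · have e1 : 5 * Real.sqrt (Real.log (x+a)) * (Real.log (x+a) - Real.log x)
              ≤ 5 * Real.sqrt (Real.log x + 1) * (Real.log (x+a) - Real.log x) := by
            nlinarith [Real.sqrt_nonneg (Real.log (x+a))]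
          have e2 := mul_le_mul_of_nonneg_left hd
            (show (0:ℝ) ≤ 5 * Real.sqrt (Real.log x + 1) by positivity)
          linarith
        · have : (0:ℝ) ≤ 5 * Real.sqrt (Real.log x + 1) * (2 * |a| / x) := by positivity
          nlinarith [Real.sqrt_nonneg (Real.log (x+a))]
      refine hkey.trans ?_
      rw [show 5 * Real.sqrt (Real.log x + 1) * (2 * |a| / x)
          = (10 * |a| * Real.sqrt (Real.log x + 1)) / x by ring]
      rw [div_le_div_iff₀ hx0 hx0]
      nlinarith [mul_nonneg hs0 hx0.le]
  have hb := abs_sub_bound hex hey hcond1 hcond2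
  have hfx : 0 < f0 x := f0_pos (one_le_of_exp_le hex)
  rw [show f0 (x+a) / f0 x - 1 = (f0 (x+a) - f0 x) / f0 x by field_simp,
    abs_div, abs_of_pos hfx, div_le_iff₀ hfx]
  exact hb



noncomputable def p1 (x : ℝ) : ℝ := II⁻¹ * f0 x

lemma p1_nonneg (x : ℝ) : 0 ≤ p1 x := mul_nonneg (inv_pos.2 II_pos).le (f0_nonneg x)

lemma p1_pos {x : ℝ} (hx : 1 ≤ x) : 0 < p1 x :=
  mul_pos (inv_pos.2 II_pos) (f0_pos hx)

lemma measurable_p1 : Measurable p1 := measurable_f0.const_mul _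

lemma integrable_p1 : Integrable p1 := integrable_f0.const_mul _

lemma integral_p1 : (∫ x, p1 x) = 1 := by
  unfold p1
  rw [integral_const_mul]
  exact inv_mul_cancel₀ II_pos.ne'

lemma isDensity_p1 : IsDensity p1 := ⟨p1_nonneg, integral_p1⟩

lemma longTailed_p1 : LongTailedFun p1 := by
  constructor
  · filter_upwards [eventually_ge_atTop (1:ℝ)] with x hx
    exact p1_pos hx
  · intro a
    have heq : ∀ x, p1 (x + a) / p1 x = f0 (x + a) / f0 x := by
      intro x
      unfold p1
      rw [mul_div_mul_left _ _ (inv_ne_zero II_pos.ne')]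
    simpa only [heq] using longtail_f0 a

lemma conv_p1 (x : ℝ) : conv p1 p1 x = II⁻¹ * (II⁻¹ * conv f0 f0 x) := by
  unfold conv p1
  rw [show (∫ u, II⁻¹ * f0 (x - u) * (II⁻¹ * f0 u))
      = ∫ u, II⁻¹ * (II⁻¹ * (f0 (x - u) * f0 u)) by congr 1; funext u; ring,
    integral_const_mul, integral_const_mul]

lemma subexp_p1 : SubexpDensity p1 := by
  refine ⟨⟨isDensity_p1, longTailed_p1⟩, ?_⟩
  have heq : ∀ x, conv p1 p1 x / p1 x = II⁻¹ * (conv f0 f0 x / f0 x) := by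
    intro x
    rw [conv_p1]
    unfold p1
    rw [mul_div_mul_left _ _ (inv_ne_zero II_pos.ne'), mul_div_assoc]
  have := subexp_f0.const_mul II⁻¹
  rw [show II⁻¹ * (2 * II) = 2 by
    rw [mul_comm (2:ℝ) II, ← mul_assoc, inv_mul_cancel₀ II_pos.ne', one_mul]] at this
  simpa only [heq] using this

noncomputable def tk (k : ℕ) : ℝ := (Real.pi/2 + 2*Real.pi*k)^2

noncomputable def sk (k : ℕ) : ℝ := (3*Real.pi/2 + 2*Real.pi*k)^2

noncomputable def xk (k : ℕ) : ℝ := Real.exp (tk k)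

noncomputable def yk (k : ℕ) : ℝ := Real.exp (sk k)

noncomputable def zk (k : ℕ) : ℝ := yk k - xk k

lemma pi_pos' : (0:ℝ) < Real.pi := Real.pi_pos

lemma tk_base_nonneg (k : ℕ) : (0:ℝ) ≤ Real.pi/2 + 2*Real.pi*k := by
  have := Real.pi_pos
  positivity

lemma sk_base_nonneg (k : ℕ) : (0:ℝ) ≤ 3*Real.pi/2 + 2*Real.pi*k := by
  have := Real.pi_pos
  positivity

lemma tk_nonneg (k : ℕ) : 0 ≤ tk k := sq_nonneg _

lemma tk_lt_sk (k : ℕ) : tk k < sk k := by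
  unfold tk sk
  have h := Real.pi_pos
  have hk : (0:ℝ) ≤ (k:ℝ) := Nat.cast_nonneg k
  have hb : Real.pi/2 + 2*Real.pi*k < 3*Real.pi/2 + 2*Real.pi*k := by linarith
  exact pow_lt_pow_left₀ hb (tk_base_nonneg k) two_ne_zero

lemma sk_ge_20 (k : ℕ) : (20:ℝ) ≤ sk k := by
  unfold sk
  have h := Real.pi_gt_three
  have hk : (0:ℝ) ≤ (k:ℝ) := Nat.cast_nonneg k
  have hb : (4.5:ℝ) ≤ 3*Real.pi/2 + 2*Real.pi*k := by nlinarith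
  nlinarith [sq_nonneg (3*Real.pi/2 + 2*Real.pi*(k:ℝ) - 4.5)]

lemma one_le_sk (k : ℕ) : (1:ℝ) ≤ sk k := le_trans (by norm_num) (sk_ge_20 k)

lemma zk_pos (k : ℕ) : 0 < zk k := by
  unfold zk yk xk
  have := Real.exp_lt_exp.2 (tk_lt_sk k)
  linarith

lemma sqrt_tk (k : ℕ) : Real.sqrt (tk k) = Real.pi/2 + 2*Real.pi*k :=
  Real.sqrt_sq (tk_base_nonneg k)

lemma sqrt_sk (k : ℕ) : Real.sqrt (sk k) = 3*Real.pi/2 + 2*Real.pi*k :=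
  Real.sqrt_sq (sk_base_nonneg k)

lemma sin_sqrt_tk (k : ℕ) : Real.sin (Real.sqrt (tk k)) = 1 := by
  rw [sqrt_tk, show Real.pi/2 + 2*Real.pi*k = Real.pi/2 + k*(2*Real.pi) by ring,
    Real.sin_add_nat_mul_two_pi, Real.sin_pi_div_two]

lemma sin_sqrt_sk (k : ℕ) : Real.sin (Real.sqrt (sk k)) = -1 := by
  rw [sqrt_sk, show 3*Real.pi/2 + 2*Real.pi*k = Real.pi/2 + Real.pi + k*(2*Real.pi) by ring,
    Real.sin_add_nat_mul_two_pi, Real.sin_add_pi, Real.sin_pi_div_two]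

lemma LL_tk (k : ℕ) : LL (tk k) = 4 * tk k := by
  unfold LL; rw [sin_sqrt_tk]; ring

lemma LL_sk (k : ℕ) : LL (sk k) = 2 * sk k := by
  unfold LL; rw [sin_sqrt_sk]; ring

lemma one_le_xk (k : ℕ) : 1 ≤ xk k := Real.one_le_exp (tk_nonneg k)

lemma f0_xk (k : ℕ) : f0 (xk k) = Real.exp (-(4 * tk k)) := by
  rw [f0_of_one_le (one_le_xk k)]
  unfold xk
  rw [Real.log_exp, LL_tk]

lemma yk_big (k : ℕ) : 5 * (sk k + 1) ≤ yk k := by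
  unfold yk
  have h20 := sk_ge_20 k
  have h := Real.add_one_le_exp (sk k / 2)
  have hsq : Real.exp (sk k / 2) * Real.exp (sk k / 2) = Real.exp (sk k) := by
    rw [← Real.exp_add]; ring_nf
  nlinarith [Real.exp_pos (sk k / 2)]

lemma f0_near_yk (k : ℕ) {v : ℝ} (hv : yk k ≤ v) (hv2 : v ≤ yk k + 1) :
    Real.exp (-(2 * sk k) - 1) ≤ f0 v := by
  have hyk1 : (1:ℝ) ≤ yk k := Real.one_le_exp (by linarith [sk_ge_20 k])
  have hyk0 : (0:ℝ) < yk k := by linarith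
  have hv1 : (1:ℝ) ≤ v := le_trans hyk1 hv
  rw [f0_of_one_le hv1]
  refine Real.exp_le_exp.2 ?_
  have hlog_ge : sk k ≤ Real.log v := by
    have := Real.log_le_log hyk0 hv
    unfold yk at this
    rwa [Real.log_exp] at this
  have hlog_le : Real.log v ≤ sk k + 1 / yk k := by
    have h1 : Real.log v ≤ Real.log (yk k + 1) := Real.log_le_log (by linarith) hv2
    have h2 : Real.log (yk k + 1) - sk k = Real.log ((yk k + 1) / yk k) := by
      rw [Real.log_div (by linarith) hyk0.ne']
      unfold yk
      rw [Real.log_exp]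
    have h3 : Real.log ((yk k + 1) / yk k) ≤ (yk k + 1) / yk k - 1 :=
      Real.log_le_sub_one_of_pos (by positivity)
    have h4 : (yk k + 1) / yk k - 1 = 1 / yk k := by field_simp; ring
    linarith
  have hlip := LL_lip (one_le_sk k) hlog_ge
  have habs := abs_le.1 hlip
  have hLLsk := LL_sk k
  have hsqv : Real.sqrt (Real.log v) ≤ sk k + 1 := by
    have h1 : Real.log v ≤ sk k + 1 := by
      have : 1 / yk k ≤ 1 := by
        rw [div_le_one hyk0]; linarith
      linarith
    calc Real.sqrt (Real.log v) ≤ Real.sqrt (sk k + 1) := Real.sqrt_le_sqrt h1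
      _ ≤ sk k + 1 := by
          rw [Real.sqrt_le_left (by linarith [sk_ge_20 k])]
          nlinarith [sk_ge_20 k]
  have hbound : 5 * Real.sqrt (Real.log v) * (Real.log v - sk k) ≤ 1 := by
    have h5 : Real.log v - sk k ≤ 1 / yk k := by linarith
    have hy5 := yk_big k
    have hs0 : 0 ≤ Real.sqrt (Real.log v) := Real.sqrt_nonneg _
    have h6 : 5 * Real.sqrt (Real.log v) * (Real.log v - sk k) ≤ 5 * (sk k + 1) * (1 / yk k) := by
      apply mul_le_mul (by nlinarith) h5 (by linarith) (by nlinarith [sk_ge_20 k])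
    have h7 : 5 * (sk k + 1) * (1 / yk k) ≤ 1 := by
      rw [mul_one_div, div_le_one hyk0]
      exact hy5
    linarith
  have : LL (Real.log v) ≤ 2 * sk k + 1 := by
    have := habs.2
    linarith
  linarith



noncomputable def BE (u : ℝ) : ℝ≥0∞ :=
  ∑' k : ℕ, (Set.Ioc (-(zk k)-1) (-(zk k))).indicator
    (fun _ => ENNReal.ofReal ((2:ℝ)⁻¹^(k+2))) u

noncomputable def B (u : ℝ) : ℝ := (BE u).toReal

lemma measurable_BE : Measurable BE :=
  Measurable.ennreal_tsum (fun k => measurable_const.indicator measurableSet_Ioc)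

lemma measurable_B : Measurable B := measurable_BE.ennreal_toReal

lemma sum_mk : ∑' k : ℕ, ENNReal.ofReal ((2:ℝ)⁻¹^(k+2)) = ENNReal.ofReal (1/2) := by
  rw [← ENNReal.ofReal_tsum_of_nonneg (fun k => by positivity)]
  · congr 1
    have h : ∀ k : ℕ, (2:ℝ)⁻¹^(k+2) = (1/4) * (1/2)^k := by
      intro k
      rw [pow_add]
      norm_num
      ring
    rw [tsum_congr h, tsum_mul_left, tsum_geometric_of_lt_one (by norm_num) (by norm_num)]
    norm_num
  · have h : ∀ k : ℕ, (2:ℝ)⁻¹^(k+2) = (1/4) * (1/2)^k := by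
      intro k
      rw [pow_add]; norm_num; ring
    refine Summable.congr ?_ (fun k => (h k).symm)
    exact (summable_geometric_of_lt_one (by norm_num) (by norm_num)).mul_left _

lemma BE_le (u : ℝ) : BE u ≤ ENNReal.ofReal (1/2) := by
  rw [← sum_mk]
  refine ENNReal.tsum_le_tsum (fun k => ?_)
  exact Set.indicator_le_self' (fun _ _ => zero_le) u

lemma BE_ne_top (u : ℝ) : BE u ≠ ⊤ :=
  ne_top_of_le_ne_top ENNReal.ofReal_ne_top (BE_le u)

lemma B_nonneg (u : ℝ) : 0 ≤ B u := ENNReal.toReal_nonneg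

lemma B_le_half (u : ℝ) : B u ≤ 1/2 := by
  have := ENNReal.toReal_mono ENNReal.ofReal_ne_top (BE_le u)
  rwa [ENNReal.toReal_ofReal (by norm_num)] at this

lemma B_eq_zero_of_nonneg {u : ℝ} (hu : 0 ≤ u) : B u = 0 := by
  unfold B BE
  have h : ∀ k : ℕ, (Set.Ioc (-(zk k)-1) (-(zk k))).indicator
      (fun _ => ENNReal.ofReal ((2:ℝ)⁻¹^(k+2))) u = 0 := by
    intro k
    apply Set.indicator_of_notMem
    intro hmem
    have := hmem.2
    have := zk_pos k
    linarith
  rw [tsum_congr h]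
  simp

lemma lintegral_BE : ∫⁻ u, BE u = ENNReal.ofReal (1/2) := by
  unfold BE
  rw [lintegral_tsum (fun k => (measurable_const.indicator measurableSet_Ioc).aemeasurable)]
  have h : ∀ k : ℕ, (∫⁻ u, (Set.Ioc (-(zk k)-1) (-(zk k))).indicator
      (fun _ => ENNReal.ofReal ((2:ℝ)⁻¹^(k+2))) u) = ENNReal.ofReal ((2:ℝ)⁻¹^(k+2)) := by
    intro k
    rw [lintegral_indicator measurableSet_Ioc, setLIntegral_const]
    rw [Real.volume_Ioc, show (-(zk k) - (-(zk k)-1)) = 1 by ring]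
    simp
  rw [tsum_congr h, sum_mk]

lemma integrable_B : Integrable B := by
  refine integrable_toReal_of_lintegral_ne_top measurable_BE.aemeasurable ?_
  rw [lintegral_BE]
  exact ENNReal.ofReal_ne_top

lemma integral_B : (∫ u, B u) = 1/2 := by
  unfold B
  rw [integral_toReal measurable_BE.aemeasurable
    (ae_of_all _ (fun u => lt_of_le_of_ne (le_top) (BE_ne_top u)))]
  rw [lintegral_BE, ENNReal.toReal_ofReal (by norm_num)]

lemma B_ge_on (k : ℕ) {u : ℝ} (hu : u ∈ Set.Ioc (-(zk k)-1) (-(zk k))) :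
    (2:ℝ)⁻¹^(k+2) ≤ B u := by
  have hterm : ENNReal.ofReal ((2:ℝ)⁻¹^(k+2)) ≤ BE u := by
    unfold BE
    have := ENNReal.le_tsum (f := fun k : ℕ => (Set.Ioc (-(zk k)-1) (-(zk k))).indicator
      (fun _ => ENNReal.ofReal ((2:ℝ)⁻¹^(k+2))) u) k
    rwa [Set.indicator_of_mem hu] at this
  have := ENNReal.toReal_mono (BE_ne_top u) hterm
  rwa [ENNReal.toReal_ofReal (by positivity)] at this

noncomputable def p2 (x : ℝ) : ℝ := 2⁻¹ * p1 x + B x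

lemma p2_nonneg (x : ℝ) : 0 ≤ p2 x := by
  unfold p2
  have := p1_nonneg x
  have := B_nonneg x
  linarith

lemma measurable_p2 : Measurable p2 := (measurable_p1.const_mul _).add measurable_B

lemma integrable_p2 : Integrable p2 := (integrable_p1.const_mul _).add integrable_B

lemma integral_p2 : (∫ x, p2 x) = 1 := by
  unfold p2
  rw [integral_add (integrable_p1.const_mul _) integrable_B, integral_const_mul,
    integral_p1, integral_B]
  norm_num

lemma isDensity_p2 : IsDensity p2 := ⟨p2_nonneg, integral_p2⟩

lemma p2_bound (x : ℝ) : p2 x ≤ 2⁻¹ * II⁻¹ + 1/2 := by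
  unfold p2 p1
  have h1 : f0 x ≤ 1 := f0_le_one x
  have h2 : B x ≤ 1/2 := B_le_half x
  have h3 : (0:ℝ) < II⁻¹ := inv_pos.2 II_pos
  nlinarith [f0_nonneg x]

lemma p2_eq_of_nonneg {x : ℝ} (hx : 0 ≤ x) : p2 x = 2⁻¹ * p1 x := by
  unfold p2
  rw [B_eq_zero_of_nonneg hx, add_zero]

lemma p2_ge_p1 (x : ℝ) : 2⁻¹ * p1 x ≤ p2 x := by
  unfold p2
  linarith [B_nonneg x]

lemma integrable_conv_integrand (x : ℝ) : Integrable (fun u => p2 (x - u) * p2 u) := by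
  refine Integrable.bdd_mul integrable_p2
    (measurable_p2.comp (measurable_const.sub measurable_id)).aestronglyMeasurable
    (c := 2⁻¹ * II⁻¹ + 1/2) (ae_of_all _ fun u => ?_)
  rw [Real.norm_of_nonneg (p2_nonneg _)]
  exact p2_bound _

lemma conv_p2_lower (k : ℕ) :
    (2⁻¹ * (II⁻¹ * Real.exp (-(2 * sk k) - 1)) * (2:ℝ)⁻¹^(k+2)) ≤ conv p2 p2 (xk k) := by
  set c : ℝ := 2⁻¹ * (II⁻¹ * Real.exp (-(2 * sk k) - 1)) * (2:ℝ)⁻¹^(k+2) with hc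
  have hset : c * (volume (Set.Ioc (-(zk k)-1) (-(zk k)))).toReal ≤
      ∫ u in Set.Ioc (-(zk k)-1) (-(zk k)), p2 (xk k - u) * p2 u := by
    refine setIntegral_ge_of_const_le_real measurableSet_Ioc ?_ (fun u hu => ?_)
      (integrable_conv_integrand (xk k)).integrableOn
    · rw [Real.volume_Ioc]
      exact ENNReal.ofReal_ne_top
    · -- pointwise lower bound
      have h1 : yk k ≤ xk k - u := by
        have := hu.2
        have hz : xk k + zk k = yk k := by unfold zk; ring
        linarith
      have h2 : xk k - u ≤ yk k + 1 := by
        have := hu.1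
        have hz : xk k + zk k = yk k := by unfold zk; ring
        linarith
      have hf := f0_near_yk k h1 h2
      have hp2a : 2⁻¹ * (II⁻¹ * Real.exp (-(2 * sk k) - 1)) ≤ p2 (xk k - u) := by
        refine le_trans ?_ (p2_ge_p1 _)
        unfold p1
        have h3 : (0:ℝ) < II⁻¹ := inv_pos.2 II_pos
        nlinarith
      have hp2b : (2:ℝ)⁻¹^(k+2) ≤ p2 u := by
        refine le_trans (B_ge_on k hu) ?_
        unfold p2
        linarith [p1_nonneg u, B_nonneg u]
      rw [hc]
      have hca : (0:ℝ) ≤ 2⁻¹ * (II⁻¹ * Real.exp (-(2 * sk k) - 1)) := by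
        have h3 : (0:ℝ) < II⁻¹ := inv_pos.2 II_pos
        positivity
      exact mul_le_mul hp2a hp2b (by positivity) (le_trans hca hp2a)
  have hvol : (volume (Set.Ioc (-(zk k)-1) (-(zk k)))).toReal = 1 := by
    rw [Real.volume_Ioc, show (-(zk k) - (-(zk k)-1)) = 1 by ring]
    simp
  rw [hvol, mul_one] at hset
  refine le_trans hset ?_
  exact setIntegral_le_integral (integrable_conv_integrand (xk k))
    (ae_of_all _ (fun u => mul_nonneg (p2_nonneg _) (p2_nonneg _)))

lemma exponent_ineq {k : ℕ} (hk : 2 ≤ k) : (k:ℝ) + 4 ≤ 4 * tk k - 2 * sk k - 1 := by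
  have hπ1 := Real.pi_gt_three
  have hk' : (2:ℝ) ≤ (k:ℝ) := by exact_mod_cast hk
  have h9 : (9:ℝ) ≤ Real.pi^2 := by nlinarith
  have hp : (0:ℝ) ≤ 8*(k:ℝ)^2 - 4*(k:ℝ) - 7/2 := by nlinarith [sq_nonneg ((k:ℝ)-2)]
  have e : 4 * tk k - 2 * sk k = Real.pi^2 * (8*(k:ℝ)^2 - 4*(k:ℝ) - 7/2) := by
    unfold tk sk; ring
  rw [e]
  have h2 : 9 * (8*(k:ℝ)^2 - 4*(k:ℝ) - 7/2) ≤ Real.pi^2 * (8*(k:ℝ)^2 - 4*(k:ℝ) - 7/2) :=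
    mul_le_mul_of_nonneg_right h9 hp
  nlinarith [sq_nonneg ((k:ℝ)-2)]

lemma ratio_ge_three {k : ℕ} (hk : 2 ≤ k) : 3 ≤ conv p2 p2 (xk k) / p2 (xk k) := by
  have hp2xk : p2 (xk k) = 2⁻¹ * (II⁻¹ * Real.exp (-(4 * tk k))) := by
    rw [p2_eq_of_nonneg (le_trans zero_le_one (one_le_xk k))]
    unfold p1
    rw [f0_xk]
  have hp2pos : 0 < p2 (xk k) := by
    rw [hp2xk]
    have := inv_pos.2 II_pos
    positivity
  rw [le_div_iff₀ hp2pos]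
  refine le_trans ?_ (conv_p2_lower k)
  rw [hp2xk]
  -- 3 * (2⁻¹ II⁻¹ exp (-4tk)) ≤ 2⁻¹ II⁻¹ exp(-2sk - 1) * 2⁻¹^(k+2)
  have hkey : 3 * Real.exp (-(4 * tk k)) ≤ Real.exp (-(2 * sk k) - 1) * (2:ℝ)⁻¹^(k+2) := by
    have h1 : (3:ℝ) * 2^(k+2) ≤ Real.exp ((k:ℝ) + 4) := by
      have h2 : (2:ℝ) ≤ Real.exp 1 := by nlinarith [Real.add_one_le_exp (1:ℝ)]
      have h3 : (2:ℝ)^(k+2) ≤ Real.exp 1 ^ (k+2) :=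
        pow_le_pow_left₀ (by norm_num) h2 _
      have h4 : Real.exp 1 ^ (k+2) = Real.exp ((k:ℝ)+2) := by
        rw [← Real.exp_nat_mul]
        congr 1
        push_cast
        ring
      have h5 : (3:ℝ) ≤ Real.exp 2 := by nlinarith [Real.add_one_le_exp (2:ℝ)]
      have h6 : Real.exp ((k:ℝ)+2) * Real.exp 2 = Real.exp ((k:ℝ)+4) := by
        rw [← Real.exp_add]; ring_nf
      nlinarith [Real.exp_pos ((k:ℝ)+2), pow_pos (show (0:ℝ) < 2 by norm_num) (k+2),
        Real.exp_pos (2:ℝ)]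
    have h7 : Real.exp ((k:ℝ)+4) ≤ Real.exp (4 * tk k - 2 * sk k - 1) :=
      Real.exp_le_exp.2 (exponent_ineq hk)
    have h8 : (3:ℝ) * 2^(k+2) ≤ Real.exp (4 * tk k - 2 * sk k - 1) := le_trans h1 h7
    have h9 : Real.exp (4 * tk k - 2 * sk k - 1) * Real.exp (-(4 * tk k))
        = Real.exp (-(2 * sk k) - 1) := by
      rw [← Real.exp_add]; ring_nf
    have h10 : (2:ℝ)⁻¹^(k+2) = ((2:ℝ)^(k+2))⁻¹ := by rw [inv_pow]
    rw [h10]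
    have hpow : (0:ℝ) < (2:ℝ)^(k+2) := by positivity
    rw [← div_eq_mul_inv, le_div_iff₀ hpow]
    calc 3 * Real.exp (-(4 * tk k)) * 2^(k+2)
        = (3 * 2^(k+2)) * Real.exp (-(4 * tk k)) := by ring
      _ ≤ Real.exp (4 * tk k - 2 * sk k - 1) * Real.exp (-(4 * tk k)) :=
          mul_le_mul_of_nonneg_right h8 (Real.exp_pos _).le
      _ = Real.exp (-(2 * sk k) - 1) := h9
  have hI := inv_pos.2 II_pos
  calc 3 * (2⁻¹ * (II⁻¹ * Real.exp (-(4 * tk k))))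
      = (2⁻¹ * II⁻¹) * (3 * Real.exp (-(4 * tk k))) := by ring
    _ ≤ (2⁻¹ * II⁻¹) * (Real.exp (-(2 * sk k) - 1) * (2:ℝ)⁻¹^(k+2)) := by
        apply mul_le_mul_of_nonneg_left hkey (by positivity)
    _ = 2⁻¹ * (II⁻¹ * Real.exp (-(2 * sk k) - 1)) * (2:ℝ)⁻¹^(k+2) := by ring

lemma xk_ge (k : ℕ) : (k:ℝ) ≤ xk k := by
  unfold xk
  have h1 : (k:ℝ) ≤ tk k + 1 := by
    unfold tk
    have hπ := Real.pi_gt_three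
    have hk : (0:ℝ) ≤ (k:ℝ) := Nat.cast_nonneg k
    have hb : 6*(k:ℝ) ≤ Real.pi/2 + 2*Real.pi*k := by nlinarith
    have hb0 : (0:ℝ) ≤ 6*(k:ℝ) := by linarith
    have hsq : (6*(k:ℝ))^2 ≤ (Real.pi/2 + 2*Real.pi*k)^2 := by
      exact pow_le_pow_left₀ hb0 hb 2
    nlinarith [sq_nonneg (6*(k:ℝ) - 1/12)]
  calc (k:ℝ) ≤ tk k + 1 := h1
    _ ≤ Real.exp (tk k) := Real.add_one_le_exp _

lemma not_subexp_p2 : ¬ SubexpDensity p2 := by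
  intro h
  have h2 := h.2
  have hlt : ∀ᶠ x in atTop, conv p2 p2 x / p2 x < 3 :=
    h2.eventually_lt_const (by norm_num)
  rw [eventually_atTop] at hlt
  obtain ⟨X, hX⟩ := hlt
  set k : ℕ := max 2 ⌈X⌉₊ with hk
  have hk2 : 2 ≤ k := le_max_left _ _
  have hxk : X ≤ xk k := by
    calc X ≤ (⌈X⌉₊ : ℝ) := Nat.le_ceil X
      _ ≤ (k:ℝ) := by exact_mod_cast le_max_right _ _
      _ ≤ xk k := xk_ge k
  have := hX (xk k) hxk
  have := ratio_ge_three hk2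
  linarith

lemma final_tendsto : Tendsto (fun x => p2 x / (2⁻¹ * p1 x)) atTop (nhds 1) := by
  have heq : ∀ᶠ x in atTop, p2 x / (2⁻¹ * p1 x) = 1 := by
    filter_upwards [eventually_ge_atTop (1:ℝ)] with x hx
    rw [p2_eq_of_nonneg (by linarith : (0:ℝ) ≤ x), div_self]
    have := p1_pos hx
    positivity
  exact (tendsto_congr' heq).2 tendsto_const_nhds

end Stmt7Aux

theorem stmt7 : ∃ (p₁ p₂ : ℝ → ℝ) (c : ℝ), 0 < c ∧ SubexpDensity p₁ ∧ IsDensity p₂ ∧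
    ¬ SubexpDensity p₂ ∧ Tendsto (fun x => p₂ x / (c * p₁ x)) atTop (nhds 1) :=
  ⟨Stmt7Aux.p1, Stmt7Aux.p2, 2⁻¹, by norm_num, Stmt7Aux.subexp_p1, Stmt7Aux.isDensity_p2,
    Stmt7Aux.not_subexp_p2, Stmt7Aux.final_tendsto⟩
end

section
/- Let f and g be probability densities supported on [0,∞). If f is a subexponential density and g(x) ∼ c·f(x) as x → ∞ for some c > 0, then g is a subexponential density. (One-sided closure of S_d under asymptotic equivalence.) -/
open MeasureTheory Filter Set
open scoped ENNReal

lemma uct (φ : ℝ → ℝ) (hm : AEMeasurable φ)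
    (hpos : ∀ᶠ x in atTop, 0 < φ x)
    (hlt : ∀ a : ℝ, Tendsto (fun x => φ (x + a) / φ x) atTop (nhds 1))
    {T ε : ℝ} (hT : 0 < T) (hε : 0 < ε) :
    ∀ᶠ x in atTop, ∀ a ∈ Icc (0:ℝ) T, |φ (x - a) - φ x| ≤ ε * φ x := by
  classical
  by_contra hcon
  rw [Filter.not_eventually] at hcon
  have H : ∀ n : ℕ, ∃ x, (n:ℝ) ≤ x ∧ ∃ a, a ∈ Icc (0:ℝ) T ∧
      ¬ (|φ (x - a) - φ x| ≤ ε * φ x) := by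
    intro n
    obtain ⟨x, hx, hx2⟩ := frequently_atTop.mp hcon (n : ℝ)
    push_neg at hx2
    obtain ⟨a, ha, ha2⟩ := hx2
    exact ⟨x, hx, a, ha, not_le.mpr ha2⟩
  choose xs hxs as has hbad using H
  set δ : ℝ := min ε 1 / 4 with hδdef
  have hδpos : 0 < δ := by
    have : (0:ℝ) < min ε 1 := lt_min hε one_pos
    positivity
  have hδε : δ ≤ ε / 4 := by
    have : min ε 1 ≤ ε := min_le_left _ _
    simp only [hδdef]; linarith
  have hδ1 : δ ≤ 1 / 4 := by
    have : min ε 1 ≤ 1 := min_le_right _ _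
    simp only [hδdef]; linarith
  set ys : ℕ → ℝ := fun n => xs n - as n with hysdef
  have hxstend : Tendsto xs atTop atTop :=
    tendsto_atTop_mono hxs tendsto_natCast_atTop_atTop
  have hystend : Tendsto ys atTop atTop := by
    refine tendsto_atTop_mono (f := fun n : ℕ => (n:ℝ) - T) (g := ys) ?_ ?_
    · intro n
      have h1 := (has n).2
      have h2 := hxs n
      simp only [hysdef]; linarith
    · exact tendsto_atTop_add_const_right _ _ tendsto_natCast_atTop_atTop
  have key : ∀ (z : ℕ → ℝ), Tendsto z atTop atTop → ∀ t : ℝ,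
      ∀ᶠ m in atTop, |φ (z m + t) - φ (z m)| ≤ δ * φ (z m) := by
    intro z hz t
    have h1 : Tendsto (fun m => φ (z m + t) / φ (z m)) atTop (nhds 1) := (hlt t).comp hz
    have h2 : ∀ᶠ m in atTop, |φ (z m + t) / φ (z m) - 1| < δ := by
      have := Metric.tendsto_nhds.mp h1 δ hδpos
      simpa [Real.dist_eq] using this
    filter_upwards [h2, hz.eventually hpos] with m hm1 hm2
    have hne : φ (z m) ≠ 0 := ne_of_gt hm2
    have heq : φ (z m + t) - φ (z m) = (φ (z m + t) / φ (z m) - 1) * φ (z m) := by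
      field_simp
    rw [heq, abs_mul, abs_of_pos hm2]
    exact mul_le_mul_of_nonneg_right hm1.le hm2.le
  set Bad : (ℕ → ℝ) → ℕ → Set ℝ := fun z m =>
    {t | ¬ |φ (z m + t) - φ (z m)| ≤ δ * φ (z m)} with hBaddef
  have hBadmeas : ∀ z m, NullMeasurableSet (Bad z m) volume := by
    intro z m
    have h1 : AEMeasurable (fun t => φ (z m + t)) volume :=
      hm.comp_quasiMeasurePreserving
        ((measurePreserving_add_left volume (z m)).quasiMeasurePreserving)
    have h2 : MeasurableSet {w : ℝ | |w - φ (z m)| ≤ δ * φ (z m)} :=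
      measurableSet_le ((measurable_id.sub_const _).abs) measurable_const
    exact h1.nullMeasurable h2.compl
  set E : (ℕ → ℝ) → ℕ → Set ℝ := fun z n => Icc 0 (3*T) ∩ ⋃ m ∈ Ici n, Bad z m with hEdef
  have hEmeas : ∀ z n, NullMeasurableSet (E z n) volume := by
    intro z n
    exact (measurableSet_Icc.nullMeasurableSet).inter
      (NullMeasurableSet.iUnion fun m => NullMeasurableSet.iUnion fun _ => hBadmeas z m)
  have hEanti : ∀ z, Antitone (E z) := by
    intro z n n' hnn'
    apply inter_subset_inter_right
    exact biUnion_subset_biUnion_left (Ici_subset_Ici.mpr hnn')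
  have hEtend : ∀ z, Tendsto z atTop atTop →
      Tendsto (fun n => volume (E z n)) atTop (nhds 0) := by
    intro z hz
    have hinter : (⋂ n, E z n) = ∅ := by
      rw [eq_empty_iff_forall_notMem]
      intro t ht
      obtain ⟨N, hN⟩ := eventually_atTop.mp (key z hz t)
      have h1 := mem_iInter.mp ht N
      obtain ⟨_, h2⟩ := h1
      obtain ⟨m, hm1, hm2⟩ := mem_iUnion₂.mp h2
      exact hm2 (hN m hm1)
    have hfin : volume (E z 0) ≠ ⊤ := by
      apply ne_of_lt
      calc volume (E z 0) ≤ volume (Icc (0:ℝ) (3*T)) := measure_mono inter_subset_left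
        _ < ⊤ := by rw [Real.volume_Icc]; exact ENNReal.ofReal_lt_top
    have := tendsto_measure_iInter_atTop (hEmeas z) (hEanti z) ⟨0, hfin⟩
    rw [hinter] at this
    simpa [Function.comp_def] using this
  have hhalf : (0:ℝ≥0∞) < ENNReal.ofReal (T/2) := ENNReal.ofReal_pos.mpr (by linarith)
  obtain ⟨n₀, hn₀x, hn₀y⟩ : ∃ n₀, volume (E xs n₀) < ENNReal.ofReal (T/2) ∧
      volume (E ys n₀) < ENNReal.ofReal (T/2) :=
    (((hEtend xs hxstend).eventually (Iio_mem_nhds hhalf)).and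
      ((hEtend ys hystend).eventually (Iio_mem_nhds hhalf))).exists
  obtain ⟨Xp, hXp⟩ := eventually_atTop.mp hpos
  set n : ℕ := max n₀ ⌈Xp⌉₊ with hndef
  have hxsn : 0 < φ (xs n) := by
    apply hXp
    calc Xp ≤ (⌈Xp⌉₊ : ℝ) := Nat.le_ceil _
      _ ≤ (n : ℝ) := Nat.cast_le.mpr (le_max_right _ _)
      _ ≤ xs n := hxs n
  have hgood : ∃ t ∈ Icc (0:ℝ) (2*T), t ∉ E xs n₀ ∧ t + as n ∉ E ys n₀ := by
    by_contra hno
    push_neg at hno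
    have hsub : Icc (0:ℝ) (2*T) ⊆ E xs n₀ ∪ ((· + as n) ⁻¹' (E ys n₀)) := by
      intro t ht
      by_cases h1 : t ∈ E xs n₀
      · exact Or.inl h1
      · exact Or.inr (hno t ht h1)
    have h2 : volume (Icc (0:ℝ) (2*T)) ≤ volume (E xs n₀) + volume (E ys n₀) := by
      calc volume (Icc (0:ℝ) (2*T))
          ≤ volume (E xs n₀ ∪ ((· + as n) ⁻¹' (E ys n₀))) := measure_mono hsub
        _ ≤ volume (E xs n₀) + volume ((· + as n) ⁻¹' (E ys n₀)) := measure_union_le _ _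
        _ = volume (E xs n₀) + volume (E ys n₀) := by rw [measure_preimage_add_right]
    have h3 : volume (E xs n₀) + volume (E ys n₀) < ENNReal.ofReal T := by
      have := ENNReal.add_lt_add hn₀x hn₀y
      rwa [← ENNReal.ofReal_add (by linarith) (by linarith),
        show T/2 + T/2 = T by ring] at this
    rw [Real.volume_Icc] at h2
    have h4 : ENNReal.ofReal (2*T - 0) < ENNReal.ofReal T := lt_of_le_of_lt h2 h3
    rw [ENNReal.ofReal_lt_ofReal_iff hT] at h4
    linarith
  obtain ⟨t, ht, htx, hty⟩ := hgood
  have hnn₀ : n₀ ≤ n := le_max_left _ _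
  have hgx : |φ (xs n + t) - φ (xs n)| ≤ δ * φ (xs n) := by
    by_contra hb
    apply htx
    refine ⟨⟨ht.1, by linarith [ht.2, hT]⟩, ?_⟩
    exact mem_iUnion₂.mpr ⟨n, hnn₀, hb⟩
  have hgy : |φ (ys n + (t + as n)) - φ (ys n)| ≤ δ * φ (ys n) := by
    by_contra hb
    apply hty
    have ha := has n
    refine ⟨⟨by linarith [ht.1, ha.1], by linarith [ht.2, ha.2]⟩, ?_⟩
    exact mem_iUnion₂.mpr ⟨n, hnn₀, hb⟩
  have hzz : ys n + (t + as n) = xs n + t := by simp only [hysdef]; ring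
  rw [hzz] at hgy
  apply hbad n
  have hax := abs_le.mp hgx
  have hay := abs_le.mp hgy
  have hys' : xs n - as n = ys n := rfl
  rw [hys', abs_le]
  constructor
  · nlinarith [hax.1, hax.2, hay.1, hay.2, hxsn, hδpos, hδε, hδ1, hε]
  · nlinarith [hax.1, hax.2, hay.1, hay.2, hxsn, hδpos, hδε, hδ1, hε]

private lemma density_integrable {ψ : ℝ → ℝ} (hψ : IsDensity ψ) : Integrable ψ := by
  by_contra hni
  have h2 := hψ.2
  rw [integral_undef hni] at h2
  norm_num at h2

private lemma cov_refl (ψ : ℝ → ℝ) (x T : ℝ) :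
    (∫ u in Ioc (x - T) x, ψ (x - u)) = ∫ u in Ico (0:ℝ) T, ψ u := by
  rw [← integral_indicator measurableSet_Ioc, ← integral_indicator measurableSet_Ico]
  have hpt : (fun u => (Ioc (x-T) x).indicator (fun u => ψ (x - u)) u)
      = fun u => (Ico (0:ℝ) T).indicator ψ (x - u) := by
    funext u
    by_cases hu : u ∈ Ioc (x - T) x
    · have hu1 := hu.1
      have hu2 := hu.2
      have h2 : x - u ∈ Ico (0:ℝ) T := ⟨by linarith, by linarith⟩
      rw [indicator_of_mem hu, indicator_of_mem h2]
    · have h2 : x - u ∉ Ico (0:ℝ) T := by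
        intro h2m
        obtain ⟨h2a, h2b⟩ := h2m
        exact hu ⟨by linarith, by linarith⟩
      rw [indicator_of_notMem hu, indicator_of_notMem h2]
  rw [hpt]
  exact integral_sub_left_eq_self _ volume x

private lemma edge_left {ψ : ℝ → ℝ} (hint : Integrable ψ) (hnn : ∀ u, 0 ≤ ψ u)
    {x T ε : ℝ}
    (hb : ∀ a ∈ Icc (0:ℝ) T, |ψ (x - a) - ψ x| ≤ ε * ψ x) :
    IntegrableOn (fun u => ψ (x - u) * ψ u) (Ioc 0 T) ∧
    (1 - ε) * ψ x * (∫ u in Ioc (0:ℝ) T, ψ u) ≤ (∫ u in Ioc (0:ℝ) T, ψ (x - u) * ψ u) ∧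
    (∫ u in Ioc (0:ℝ) T, ψ (x - u) * ψ u) ≤ (1 + ε) * ψ x * (∫ u in Ioc (0:ℝ) T, ψ u) := by
  have hup : ∀ u ∈ Ioc (0:ℝ) T, ψ (x - u) * ψ u ≤ (1 + ε) * ψ x * ψ u := by
    intro u hu
    have hb' := hb u ⟨hu.1.le, hu.2⟩
    have h1 := (abs_le.mp hb').2
    exact mul_le_mul_of_nonneg_right (by linarith) (hnn u)
  have hlo : ∀ u ∈ Ioc (0:ℝ) T, (1 - ε) * ψ x * ψ u ≤ ψ (x - u) * ψ u := by
    intro u hu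
    have hb' := hb u ⟨hu.1.le, hu.2⟩
    have h1 := (abs_le.mp hb').1
    exact mul_le_mul_of_nonneg_right (by linarith) (hnn u)
  have hmeas : AEStronglyMeasurable (fun u => ψ (x - u) * ψ u)
      (volume.restrict (Ioc 0 T)) := by
    apply AEStronglyMeasurable.mul
    · exact (hint.aestronglyMeasurable.comp_quasiMeasurePreserving
        (Measure.measurePreserving_sub_left volume x).quasiMeasurePreserving).restrict
    · exact hint.aestronglyMeasurable.restrict
  have hIOn : IntegrableOn (fun u => ψ (x - u) * ψ u) (Ioc 0 T) := by
    apply Integrable.mono' ((hint.const_mul ((1+ε) * ψ x)).integrableOn) hmeas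
    rw [ae_restrict_iff' measurableSet_Ioc]
    apply Filter.Eventually.of_forall
    intro u hu
    rw [Real.norm_eq_abs, abs_of_nonneg (mul_nonneg (hnn _) (hnn _))]
    have := hup u hu
    linarith [this]
  refine ⟨hIOn, ?_, ?_⟩
  · calc (1-ε) * ψ x * (∫ u in Ioc (0:ℝ) T, ψ u)
        = ∫ u in Ioc (0:ℝ) T, (1-ε) * ψ x * ψ u := (integral_const_mul _ _).symm
      _ ≤ _ := setIntegral_mono_on ((hint.integrableOn).const_mul _) hIOn
          measurableSet_Ioc hlo
  · calc (∫ u in Ioc (0:ℝ) T, ψ (x - u) * ψ u)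
        ≤ ∫ u in Ioc (0:ℝ) T, (1+ε) * ψ x * ψ u :=
          setIntegral_mono_on hIOn ((hint.integrableOn).const_mul _)
            measurableSet_Ioc hup
      _ = _ := integral_const_mul _ _

private lemma edge_right {ψ : ℝ → ℝ} (hint : Integrable ψ) (hnn : ∀ u, 0 ≤ ψ u)
    {x T ε : ℝ} (hT : 0 < T)
    (hb : ∀ a ∈ Icc (0:ℝ) T, |ψ (x - a) - ψ x| ≤ ε * ψ x) :
    IntegrableOn (fun u => ψ (x - u) * ψ u) (Ioc (x - T) x) ∧
    (1 - ε) * ψ x * (∫ u in Ioc (0:ℝ) T, ψ u) ≤ (∫ u in Ioc (x-T) x, ψ (x - u) * ψ u) ∧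
    (∫ u in Ioc (x-T) x, ψ (x - u) * ψ u) ≤ (1 + ε) * ψ x * (∫ u in Ioc (0:ℝ) T, ψ u) := by
  have hmem : ∀ u ∈ Ioc (x-T) x, x - u ∈ Icc (0:ℝ) T := by
    intro u hu
    exact ⟨by linarith [hu.2], by linarith [hu.1]⟩
  have hup : ∀ u ∈ Ioc (x-T) x, ψ (x - u) * ψ u ≤ ψ (x - u) * ((1+ε) * ψ x) := by
    intro u hu
    have hb' := hb (x - u) (hmem u hu)
    rw [show x - (x - u) = u by ring] at hb'
    have h1 := (abs_le.mp hb').2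
    exact mul_le_mul_of_nonneg_left (by linarith) (hnn _)
  have hlo : ∀ u ∈ Ioc (x-T) x, ψ (x - u) * ((1-ε) * ψ x) ≤ ψ (x - u) * ψ u := by
    intro u hu
    have hb' := hb (x - u) (hmem u hu)
    rw [show x - (x - u) = u by ring] at hb'
    have h1 := (abs_le.mp hb').1
    exact mul_le_mul_of_nonneg_left (by linarith) (hnn _)
  have hintc : Integrable (fun u => ψ (x - u)) := (integrable_comp_sub_left ψ x).mpr hint
  have hmeas : AEStronglyMeasurable (fun u => ψ (x - u) * ψ u)
      (volume.restrict (Ioc (x-T) x)) :=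
    AEStronglyMeasurable.mul (hintc.aestronglyMeasurable.restrict)
      (hint.aestronglyMeasurable.restrict)
  have hIOn : IntegrableOn (fun u => ψ (x - u) * ψ u) (Ioc (x-T) x) := by
    apply Integrable.mono' ((hintc.mul_const ((1+ε) * ψ x)).integrableOn) hmeas
    rw [ae_restrict_iff' measurableSet_Ioc]
    apply Filter.Eventually.of_forall
    intro u hu
    rw [Real.norm_eq_abs, abs_of_nonneg (mul_nonneg (hnn _) (hnn _))]
    exact hup u hu
  have hcov : ∀ r : ℝ, (∫ u in Ioc (x-T) x, ψ (x - u) * r)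
      = r * ∫ u in Ioc (0:ℝ) T, ψ u := by
    intro r
    rw [integral_mul_const, cov_refl ψ x T, integral_Ico_eq_integral_Ioo, ← integral_Ioc_eq_integral_Ioo, mul_comm]
  refine ⟨hIOn, ?_, ?_⟩
  · calc (1-ε) * ψ x * (∫ u in Ioc (0:ℝ) T, ψ u)
        = ∫ u in Ioc (x-T) x, ψ (x - u) * ((1-ε) * ψ x) := (hcov _).symm
      _ ≤ _ := setIntegral_mono_on ((hintc.mul_const _).integrableOn) hIOn
          measurableSet_Ioc hlo
  · calc (∫ u in Ioc (x-T) x, ψ (x - u) * ψ u)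
        ≤ ∫ u in Ioc (x-T) x, ψ (x - u) * ((1+ε) * ψ x) :=
          setIntegral_mono_on hIOn ((hintc.mul_const _).integrableOn)
            measurableSet_Ioc hup
      _ = _ := hcov _

private lemma split_conv {ψ : ℝ → ℝ} (hψ0 : ∀ y, y < (0:ℝ) → ψ y = 0) {x T : ℝ}
    (hT : 0 < T) (hx : 2*T ≤ x)
    (h1 : IntegrableOn (fun u => ψ (x - u) * ψ u) (Ioc 0 T))
    (h2 : IntegrableOn (fun u => ψ (x - u) * ψ u) (Ioc T (x-T)))
    (h3 : IntegrableOn (fun u => ψ (x - u) * ψ u) (Ioc (x-T) x)) :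
    conv ψ ψ x = (∫ u in Ioc (0:ℝ) T, ψ (x - u) * ψ u)
      + (∫ u in Ioc T (x-T), ψ (x - u) * ψ u)
      + (∫ u in Ioc (x-T) x, ψ (x - u) * ψ u) := by
  have hd1 : Disjoint (Ioc (0:ℝ) T) (Ioc T (x-T)) := by
    rw [Set.disjoint_left]
    intro u hu hu'
    exact absurd hu'.1 (not_lt.mpr hu.2)
  have hd2 : Disjoint (Ioc (0:ℝ) T ∪ Ioc T (x-T)) (Ioc (x-T) x) := by
    rw [Set.disjoint_left]
    rintro u (hu | hu) hu'
    · exact absurd hu'.1 (not_lt.mpr (le_trans hu.2 (by linarith)))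
    · exact absurd hu'.1 (not_lt.mpr hu.2)
  have hu1 : Ioc (0:ℝ) T ∪ Ioc T (x-T) = Ioc 0 (x-T) :=
    Ioc_union_Ioc_eq_Ioc hT.le (by linarith)
  have hu2 : Ioc (0:ℝ) (x-T) ∪ Ioc (x-T) x = Ioc 0 x :=
    Ioc_union_Ioc_eq_Ioc (by linarith) (by linarith)
  have hvan : ∀ u, u ∉ Icc (0:ℝ) x → ψ (x - u) * ψ u = 0 := by
    intro u hu
    rw [mem_Icc] at hu
    push_neg at hu
    by_cases h0 : 0 ≤ u
    · rw [hψ0 (x - u) (by linarith [hu h0]), zero_mul]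
    · rw [hψ0 u (by linarith), mul_zero]
  calc conv ψ ψ x = ∫ u, ψ (x - u) * ψ u := rfl
    _ = ∫ u in Icc (0:ℝ) x, ψ (x - u) * ψ u :=
        (setIntegral_eq_integral_of_forall_compl_eq_zero hvan).symm
    _ = ∫ u in Ioc (0:ℝ) x, ψ (x - u) * ψ u := integral_Icc_eq_integral_Ioc
    _ = (∫ u in Ioc (0:ℝ) T ∪ Ioc T (x-T), ψ (x - u) * ψ u)
        + (∫ u in Ioc (x-T) x, ψ (x - u) * ψ u) := by
        rw [← hu2, ← hu1]
        exact setIntegral_union hd2 measurableSet_Ioc (h1.union h2) h3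
    _ = _ := by
        rw [setIntegral_union hd1 measurableSet_Ioc h1 h2]

set_option maxHeartbeats 2000000 in
theorem stmt8 (f g : ℝ → ℝ) (hf0 : ∀ x < (0:ℝ), f x = 0) (hg0 : ∀ x < (0:ℝ), g x = 0)
    (hgd : IsDensity g) (hf : SubexpDensity f) (c : ℝ) (hc : 0 < c)
    (h : Tendsto (fun x => g x / (c * f x)) atTop (nhds 1)) : SubexpDensity g := by
  obtain ⟨⟨hfd, hflt⟩, hfconv⟩ := hf
  obtain ⟨hfnn, hfint1⟩ := hfd
  have hgnn := hgd.1
  have hfint : Integrable f := density_integrable ⟨hfnn, hfint1⟩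
  have hgint : Integrable g := density_integrable hgd
  have hfpos := hflt.1
  have hcomp : ∀ η : ℝ, 0 < η → η < 1 →
      ∀ᶠ x in atTop, 0 < f x ∧ 0 < g x ∧ (1 - η) * (c * f x) ≤ g x ∧
        g x ≤ (1 + η) * (c * f x) := by
    intro η hη hη1
    have h1 := Metric.tendsto_nhds.mp h η hη
    filter_upwards [h1, hfpos] with x hx hfx
    rw [Real.dist_eq] at hx
    obtain ⟨hl, hr⟩ := abs_lt.mp hx
    have hcf : 0 < c * f x := mul_pos hc hfx
    have hgl : (1 - η) * (c * f x) < g x := (lt_div_iff₀ hcf).mp (by linarith)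
    have hgu : g x < (1 + η) * (c * f x) := by
      have h2 : g x / (c * f x) < 1 + η := by linarith
      calc g x = g x / (c * f x) * (c * f x) := by field_simp
        _ < (1 + η) * (c * f x) := mul_lt_mul_of_pos_right h2 hcf
    have hgx : 0 < g x := lt_of_lt_of_le (mul_pos (by linarith) hcf) hgl.le
    exact ⟨hfx, hgx, hgl.le, hgu.le⟩
  have hgpos : ∀ᶠ x in atTop, 0 < g x :=
    (hcomp (1/2) (by norm_num) (by norm_num)).mono fun x hx => hx.2.1
  have hglt : LongTailedFun g := by
    refine ⟨hgpos, fun a => ?_⟩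
    have l1 : Tendsto (fun x => g (x + a) / (c * f (x + a))) atTop (nhds 1) :=
      h.comp (tendsto_atTop_add_const_right atTop a tendsto_id)
    have l2 := hflt.2 a
    have l3 : Tendsto (fun x => (g x / (c * f x))⁻¹) atTop (nhds 1) := by
      simpa using h.inv₀ one_ne_zero
    have l4 := (l1.mul l2).mul l3
    rw [show (1:ℝ) * 1 * 1 = 1 by norm_num] at l4
    refine Tendsto.congr' ?_ l4
    have hfpos' : ∀ᶠ x in atTop, 0 < f (x + a) :=
      (tendsto_atTop_add_const_right atTop a tendsto_id).eventually hfpos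
    filter_upwards [hfpos, hfpos', hgpos] with x h1 h2 h3
    field_simp
  have tail : ∀ ψ : ℝ → ℝ, Integrable ψ → (∫ u, ψ u) = 1 → (∀ y < (0:ℝ), ψ y = 0) →
      Tendsto (fun T => ∫ u in Ioc (0:ℝ) T, ψ u) atTop (nhds 1) := by
    intro ψ hint hint1 h0
    have hIic : (∫ u in Iic (0:ℝ), ψ u) = 0 := by
      rw [integral_Iic_eq_integral_Iio]
      exact setIntegral_eq_zero_of_forall_eq_zero fun u hu => h0 u hu
    have hIoi : (∫ u in Ioi (0:ℝ), ψ u) = 1 := by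
      have h2 := integral_add_compl (measurableSet_Iic (a := (0:ℝ))) hint
      rw [compl_Iic, hIic, hint1] at h2
      linarith
    have h2 := intervalIntegral_tendsto_integral_Ioi 0 hint.integrableOn tendsto_id
    rw [hIoi] at h2
    refine Tendsto.congr' ?_ h2
    filter_upwards [eventually_ge_atTop (0:ℝ)] with T hT
    exact intervalIntegral.integral_of_le hT
  have hGtail := tail g hgint hgd.2 hg0
  have hFtail := tail f hfint hfint1 hf0
  have hconvfpos : ∀ᶠ x in atTop, 0 < conv f f x ∧
      Integrable (fun u => f (x - u) * f u) := by
    have h1 : ∀ᶠ x in atTop, 1 < conv f f x / f x :=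
      hfconv.eventually (eventually_gt_nhds one_lt_two)
    filter_upwards [h1, hfpos] with x hx hfx
    have hpos : 0 < conv f f x := by
      by_contra hle
      push_neg at hle
      have h2 : conv f f x / f x ≤ 0 := div_nonpos_iff.mpr (Or.inr ⟨hle, hfx.le⟩)
      linarith
    refine ⟨hpos, ?_⟩
    by_contra hni
    have h3 : conv f f x = 0 := integral_undef hni
    rw [h3] at hpos
    exact lt_irrefl _ hpos
  refine ⟨⟨hgd, hglt⟩, ?_⟩
  rw [Metric.tendsto_nhds]
  intro ε₀ hε₀
  set K : ℝ := 40 * c + 10 with hKdef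
  have hK : 0 < K := by positivity
  set ε : ℝ := min (ε₀ / (2 * K)) (1/2) with hεdef
  have hεpos : 0 < ε := lt_min (by positivity) (by norm_num)
  have hεhalf : ε ≤ 1/2 := min_le_right _ _
  have hεK : K * ε ≤ ε₀ / 2 := by
    have h1 : ε ≤ ε₀ / (2 * K) := min_le_left _ _
    calc K * ε ≤ K * (ε₀ / (2 * K)) := mul_le_mul_of_nonneg_left h1 hK.le
      _ = ε₀ / 2 := by field_simp
  obtain ⟨t₀, ht₀⟩ := eventually_atTop.mp (hcomp (1/2) (by norm_num) (by norm_num))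
  obtain ⟨T, ⟨hTg, hTf⟩, hTge⟩ :=
    (((hGtail.eventually (eventually_ge_nhds (by linarith : 1 - ε < 1))).and
      (hFtail.eventually (eventually_ge_nhds (by linarith : 1 - ε < 1)))).and
      (eventually_ge_atTop (max t₀ 1))).exists
  have hT0 : 0 < T := lt_of_lt_of_le one_pos (le_trans (le_max_right _ _) hTge)
  have hTt₀ : t₀ ≤ T := le_trans (le_max_left _ _) hTge
  set GT : ℝ := ∫ u in Ioc (0:ℝ) T, g u with hGTdef
  set FT : ℝ := ∫ u in Ioc (0:ℝ) T, f u with hFTdef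
  have hGT1 : GT ≤ 1 := by
    rw [hGTdef, ← hgd.2]
    exact setIntegral_le_integral hgint (Filter.Eventually.of_forall hgnn)
  have hFT1 : FT ≤ 1 := by
    rw [hFTdef, ← hfint1]
    exact setIntegral_le_integral hfint (Filter.Eventually.of_forall hfnn)
  have hfub : ∀ᶠ x in atTop, conv f f x ≤ (2 + ε) * f x := by
    filter_upwards [hfconv.eventually (eventually_le_nhds (by linarith : (2:ℝ) < 2 + ε)),
      hfpos] with x h1 h2
    exact (div_le_iff₀ h2).mp h1
  have hmax1 : t₀ ≤ max t₀ 0 := le_max_left _ _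
  have hmax2 : (0:ℝ) ≤ max t₀ 0 := le_max_right _ _
  filter_upwards [uct g hgint.aemeasurable hgpos hglt.2 hT0 hεpos,
    uct f hfint.aemeasurable hfpos hflt.2 hT0 hεpos,
    hconvfpos, hfub, eventually_ge_atTop (2*T + max t₀ 0 + 1)]
    with x huctg huctf hconvfx hfubx hxbig
  have hx0 : 0 < f x ∧ 0 < g x ∧ (1 - 1/2) * (c * f x) ≤ g x ∧
      g x ≤ (1 + 1/2) * (c * f x) := ht₀ x (by linarith)
  obtain ⟨hfx, hgx, hgfl, hgfu⟩ := hx0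
  have hxT : 2 * T ≤ x := by linarith
  -- edge estimates
  have hAg := edge_left hgint hgnn huctg
  have hBg := edge_right hgint hgnn hT0 huctg
  have hAf := edge_left hfint hfnn huctf
  have hBf := edge_right hfint hfnn hT0 huctf
  -- middle bounds
  have hmidb : ∀ u ∈ Ioc T (x - T), g (x - u) * g u ≤ 4*c^2 * (f (x - u) * f u) := by
    intro u hu
    have hu1 := hu.1
    have hu2 := hu.2
    have h1 := ht₀ u (by linarith)
    have h2 := ht₀ (x - u) (by linarith)
    have hgu : g u ≤ 2 * c * f u := by nlinarith [h1.2.2.2, mul_pos hc h1.1]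
    have hgxu : g (x - u) ≤ 2 * c * f (x - u) := by nlinarith [h2.2.2.2, mul_pos hc h2.1]
    have hb2 : (0:ℝ) ≤ 2 * c * f (x - u) := by
      have := hfnn (x - u); positivity
    calc g (x - u) * g u ≤ (2 * c * f (x - u)) * (2 * c * f u) :=
          mul_le_mul hgxu hgu (hgnn u) hb2
      _ = 4*c^2 * (f (x - u) * f u) := by ring
  have hmidint : IntegrableOn (fun u => g (x - u) * g u) (Ioc T (x - T)) := by
    apply Integrable.mono' ((hconvfx.2.const_mul (4*c^2)).integrableOn)
    · exact AEStronglyMeasurable.mul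
        ((hgint.aestronglyMeasurable.comp_quasiMeasurePreserving
          (Measure.measurePreserving_sub_left volume x).quasiMeasurePreserving).restrict)
        (hgint.aestronglyMeasurable.restrict)
    · rw [ae_restrict_iff' measurableSet_Ioc]
      apply Filter.Eventually.of_forall
      intro u hu
      rw [Real.norm_eq_abs, abs_of_nonneg (mul_nonneg (hgnn _) (hgnn _))]
      exact hmidb u hu
  have hmidg_le : (∫ u in Ioc T (x - T), g (x - u) * g u)
      ≤ 4*c^2 * ∫ u in Ioc T (x - T), f (x - u) * f u := by
    calc (∫ u in Ioc T (x - T), g (x - u) * g u)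
        ≤ ∫ u in Ioc T (x - T), 4*c^2 * (f (x - u) * f u) :=
          setIntegral_mono_on hmidint ((hconvfx.2.const_mul _).integrableOn)
            measurableSet_Ioc hmidb
      _ = _ := integral_const_mul _ _
  have hmidg_nn : 0 ≤ ∫ u in Ioc T (x - T), g (x - u) * g u :=
    setIntegral_nonneg measurableSet_Ioc fun u _ => mul_nonneg (hgnn _) (hgnn _)
  -- split identities
  have hsplitg := split_conv hg0 hT0 hxT hAg.1 hmidint hBg.1
  have hsplitf := split_conv hf0 hT0 hxT (hconvfx.2.integrableOn)
    (hconvfx.2.integrableOn) (hconvfx.2.integrableOn)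
  -- f middle bound
  have hMf : (∫ u in Ioc T (x - T), f (x - u) * f u)
      ≤ (2 + ε) * f x - 2 * ((1 - ε) * f x * FT) := by
    have h1 := hAf.2.1
    have h2 := hBf.2.1
    rw [← hFTdef] at h1 h2
    linarith [hfubx, hsplitf.symm.le, hsplitf.ge, hsplitf]
  have hM : (∫ u in Ioc T (x - T), g (x - u) * g u) ≤ 40 * c * ε * g x := by
    have h1 : (∫ u in Ioc T (x - T), f (x - u) * f u) ≤ 5 * ε * f x := by
      nlinarith [hMf, hTf, hFT1, hfx.le, hεpos.le, hεhalf,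
        mul_nonneg (mul_nonneg (by linarith : (0:ℝ) ≤ 1 - ε) hfx.le)
          (by linarith : (0:ℝ) ≤ FT - (1 - ε)),
        mul_nonneg (mul_nonneg hεpos.le hεpos.le) hfx.le]
    have h2 : c * f x ≤ 2 * g x := by nlinarith [hgfl]
    have h3 : 20*c*ε*(c*f x) ≤ 20*c*ε*(2*g x) :=
      mul_le_mul_of_nonneg_left h2 (by positivity)
    calc (∫ u in Ioc T (x - T), g (x - u) * g u)
        ≤ 4*c^2 * ∫ u in Ioc T (x - T), f (x - u) * f u := hmidg_le
      _ ≤ 4*c^2 * (5 * ε * f x) :=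
          mul_le_mul_of_nonneg_left h1 (by positivity)
      _ ≤ 40 * c * ε * g x := by nlinarith [h3]
  -- edge bounds for g, numeric
  have hE1lo : (1 - 2*ε) * g x ≤ ∫ u in Ioc (0:ℝ) T, g (x - u) * g u := by
    have h1 := hAg.2.1
    rw [← hGTdef] at h1
    nlinarith [h1, hTg, hGT1, hgx.le, hεpos.le, hεhalf,
      mul_nonneg (mul_nonneg (by linarith : (0:ℝ) ≤ 1 - ε)
        (by linarith : (0:ℝ) ≤ GT - (1 - ε))) hgx.le,
      mul_nonneg (mul_nonneg hεpos.le hεpos.le) hgx.le]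
  have hE1hi : (∫ u in Ioc (0:ℝ) T, g (x - u) * g u) ≤ (1 + ε) * g x := by
    have h1 := hAg.2.2
    rw [← hGTdef] at h1
    nlinarith [h1, hTg, hGT1, hgx.le, hεpos.le,
      mul_nonneg (mul_nonneg (by linarith : (0:ℝ) ≤ 1 + ε) hgx.le)
        (by linarith : (0:ℝ) ≤ 1 - GT)]
  have hE2lo : (1 - 2*ε) * g x ≤ ∫ u in Ioc (x - T) x, g (x - u) * g u := by
    have h1 := hBg.2.1
    rw [← hGTdef] at h1
    nlinarith [h1, hTg, hGT1, hgx.le, hεpos.le, hεhalf,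
      mul_nonneg (mul_nonneg (by linarith : (0:ℝ) ≤ 1 - ε)
        (by linarith : (0:ℝ) ≤ GT - (1 - ε))) hgx.le,
      mul_nonneg (mul_nonneg hεpos.le hεpos.le) hgx.le]
  have hE2hi : (∫ u in Ioc (x - T) x, g (x - u) * g u) ≤ (1 + ε) * g x := by
    have h1 := hBg.2.2
    rw [← hGTdef] at h1
    nlinarith [h1, hTg, hGT1, hgx.le, hεpos.le,
      mul_nonneg (mul_nonneg (by linarith : (0:ℝ) ≤ 1 + ε) hgx.le)
        (by linarith : (0:ℝ) ≤ 1 - GT)]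
  -- combine
  have hub : conv g g x / g x ≤ 2 + (2 + 40*c) * ε := by
    rw [div_le_iff₀ hgx]
    rw [hsplitg]
    linarith [hE1hi, hE2hi, hM]
  have hlb : 2 - 4*ε ≤ conv g g x / g x := by
    rw [le_div_iff₀ hgx]
    rw [hsplitg]
    linarith [hE1lo, hE2lo, hmidg_nn]
  have e1 : (2 + 40*c) * ε ≤ K * ε := by
    rw [hKdef]; nlinarith [hεpos.le, hc.le]
  have e2 : 4 * ε ≤ K * ε := by
    rw [hKdef]; nlinarith [hεpos.le, hc.le]
  rw [Real.dist_eq, abs_lt]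
  constructor
  · linarith [hlb, hεK, e2, hε₀]
  · linarith [hub, hεK, e1, hε₀]
end

section
/- If f is a long-tailed probability density on [0,∞), then for every n ∈ ℕ the n-fold convolution power f^{⊗n} is also a long-tailed density. -/
open MeasureTheory Filter Set

/-- `fconvPow f n` is the (n+1)-fold convolution power of `f`. -/
noncomputable def fconvPow (f : ℝ → ℝ) : ℕ → ℝ → ℝ
  | 0 => f
  | n + 1 => conv f (fconvPow f n)

lemma IsDensity.integrable' {f : ℝ → ℝ} (hf : IsDensity f) : Integrable f := by
  by_contra h
  have h0 := integral_undef h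
  rw [hf.2] at h0; norm_num at h0

lemma integrable_comp_sub' {f : ℝ → ℝ} (hf : Integrable f) (x : ℝ) :
    Integrable (fun u => f (x - u)) :=
  (integrable_comp_sub_left f x).2 hf

lemma aesm_comp_sub' {f : ℝ → ℝ} (hf : AEStronglyMeasurable f (volume : Measure ℝ)) (x : ℝ) :
    AEStronglyMeasurable (fun u => f (x - u)) (volume : Measure ℝ) :=
  hf.comp_quasiMeasurePreserving (quasiMeasurePreserving_sub_left volume x)

lemma integral_comp_sub' (f : ℝ → ℝ) (x : ℝ) :
    ∫ u, f (x - u) = ∫ u, f u := integral_sub_left_eq_self f volume x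

lemma split_integral' {F : ℝ → ℝ} (hF : Integrable F) (y m : ℝ) :
    ∫ u, F u = (∫ u in Iic m, F u) + ∫ v in Iio (y - m), F (y - v) := by
  have h1 : ∫ u, F u = (∫ u in Iic m, F u) + ∫ u in Ioi m, F u := by
    rw [← compl_Iic, integral_add_compl measurableSet_Iic hF]
  rw [h1]
  congr 1
  rw [← integral_indicator measurableSet_Ioi, ← integral_indicator measurableSet_Iio,
    ← integral_comp_sub' (fun u => indicator (Ioi m) F u) y]
  congr 1
  funext v
  by_cases h : v < y - m
  · rw [indicator_of_mem (show y - v ∈ Ioi m by simp only [mem_Ioi]; linarith),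
      indicator_of_mem (by simpa using h)]
  · rw [indicator_of_notMem (show y - v ∉ Ioi m by simp only [mem_Ioi]; push_neg; linarith),
      indicator_of_notMem (by simpa using h)]

lemma blocks' {ψ : ℝ → ℝ} (hψ : Integrable ψ) (hψ0 : ∀ v, 0 ≤ ψ v) (s a : ℝ) (ha : 0 ≤ a)
    (N : ℕ) (hN : 1 ≤ N) :
    ∃ j < N, (∫ v in Ico (s + j * a) (s + (j + 1) * a), ψ v) ≤ (∫ v, ψ v) / N := by
  have hsum : ∀ n : ℕ, (∑ j ∈ Finset.range n,
      ∫ v in Ico (s + j * a) (s + (j + 1) * a), ψ v) = ∫ v in Ico s (s + n * a), ψ v := by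
    intro n
    induction n with
    | zero => simp
    | succ n ih =>
      rw [Finset.sum_range_succ, ih, ← setIntegral_union Ico_disjoint_Ico_same
        measurableSet_Ico hψ.integrableOn hψ.integrableOn,
        Ico_union_Ico_eq_Ico (by nlinarith [Nat.cast_nonneg (α := ℝ) n])
          (by push_cast; nlinarith)]
      push_cast
      ring_nf
  by_contra hcon
  push_neg at hcon
  have hlt : (∫ v, ψ v) < ∑ j ∈ Finset.range N, ∫ v in Ico (s + j * a) (s + (j+1) * a), ψ v := by
    have h1 : (∫ v, ψ v) = N * ((∫ v, ψ v) / N) := by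
      field_simp
    rw [h1]
    have := Finset.sum_lt_sum_of_nonempty (s := Finset.range N)
      (Finset.nonempty_range_iff.2 (by omega))
      (f := fun _ : ℕ => (∫ v, ψ v) / N)
      (g := fun j : ℕ => ∫ v in Ico (s + j * a) (s + (j+1) * a), ψ v)
      (fun j hj => hcon j (Finset.mem_range.1 hj))
    calc (N:ℝ) * ((∫ v, ψ v) / N) = ∑ _j ∈ Finset.range N, (∫ v, ψ v) / N := by
          simp [Finset.sum_const, Finset.card_range, mul_comm]
      _ < _ := this
  rw [hsum] at hlt
  exact absurd (setIntegral_le_integral hψ (Eventually.of_forall hψ0)) (by linarith)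

lemma LongDensity.eventually_le' {f : ℝ → ℝ} (hf : LongDensity f) :
    ∃ C : ℝ, ∀ᶠ x in atTop, f x ≤ C := by
  by_contra hcon
  push_neg at hcon
  have hfreq : ∀ k : ℕ, ∃ b ≥ (k : ℝ), (k : ℝ) < f b := by
    intro k
    have := hcon k
    exact frequently_atTop.1 this _
  choose x hx1 hx2 using hfreq
  have hxtop : Tendsto x atTop atTop :=
    tendsto_atTop_mono hx1 tendsto_natCast_atTop_atTop
  have hfx : Tendsto (fun k => f (x k)) atTop atTop :=
    tendsto_atTop_mono (fun k => (hx2 k).le) tendsto_natCast_atTop_atTop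
  have key : ∀ a : ℝ, Tendsto (fun k => f (x k + a)) atTop atTop := by
    intro a
    have hr : Tendsto (fun k => f (x k + a) / f (x k)) atTop (nhds 1) :=
      (hf.2.2 a).comp hxtop
    have : Tendsto (fun k => f (x k + a) / f (x k) * f (x k)) atTop atTop :=
      hr.pos_mul_atTop one_pos hfx
    refine this.congr' ?_
    filter_upwards [eventually_gt_atTop 0] with k hk
    have hpos : f (x k) ≠ 0 := by
      have h2 := hx2 k
      have h3 : (0:ℝ) ≤ (k:ℝ) := Nat.cast_nonneg k
      linarith
    field_simp
  have haem : ∀ k : ℕ, AEMeasurable (fun a => ENNReal.ofReal (f (x k + a)))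
      (volume.restrict (Icc (0:ℝ) 1)) := by
    intro k
    have h1 : AEMeasurable f (volume : Measure ℝ) := hf.1.integrable'.aemeasurable
    have h2 : AEMeasurable (fun a => f (x k + a)) (volume : Measure ℝ) :=
      h1.comp_quasiMeasurePreserving
        (measurePreserving_add_left volume (x k)).quasiMeasurePreserving
    exact (ENNReal.measurable_ofReal.comp_aemeasurable h2).restrict
  have hFatou := lintegral_liminf_le' (u := atTop) haem
  have hLHS : (∫⁻ a in Icc (0:ℝ) 1,
      liminf (fun k => ENNReal.ofReal (f (x k + a))) atTop) = ⊤ := by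
    have : ∀ a : ℝ, liminf (fun k => ENNReal.ofReal (f (x k + a))) atTop = ⊤ := by
      intro a
      have : Tendsto (fun k => ENNReal.ofReal (f (x k + a))) atTop (nhds ⊤) :=
        ENNReal.tendsto_ofReal_atTop.comp (key a)
      exact this.liminf_eq
    rw [lintegral_congr (fun a => this a)]
    simp [Real.volume_Icc]
  have hRHS : liminf (fun k => ∫⁻ a in Icc (0:ℝ) 1, ENNReal.ofReal (f (x k + a))) atTop
      ≤ 1 := by
    have hb : ∀ k : ℕ, (∫⁻ a in Icc (0:ℝ) 1, ENNReal.ofReal (f (x k + a))) ≤ 1 := by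
      intro k
      calc (∫⁻ a in Icc (0:ℝ) 1, ENNReal.ofReal (f (x k + a)))
          ≤ ∫⁻ a, ENNReal.ofReal (f (x k + a)) := setLIntegral_le_lintegral _ _
        _ = ∫⁻ a, ENNReal.ofReal (f a) :=
            lintegral_add_left_eq_self (fun a => ENNReal.ofReal (f a)) (x k)
        _ = ENNReal.ofReal (∫ a, f a) :=
            (ofReal_integral_eq_lintegral_ofReal hf.1.integrable'
              (Eventually.of_forall hf.1.1)).symm
        _ = 1 := by rw [hf.1.2]; simp
    calc liminf (fun k => ∫⁻ a in Icc (0:ℝ) 1, ENNReal.ofReal (f (x k + a))) atTop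
        ≤ liminf (fun _ : ℕ => (1:ENNReal)) atTop := liminf_le_liminf (Eventually.of_forall hb)
      _ = 1 := liminf_const 1
  rw [hLHS] at hFatou
  exact absurd (le_trans hFatou hRHS) (by simp)

lemma arith_ratio {ε δ p q : ℝ} (hδ : 0 < δ) (hε0 : 0 < ε) (hε1 : ε * (δ + 4) ≤ δ)
    (hε2 : ε ≤ 1/2) (hp : 0 < p)
    (hl : (1 - ε) * p ≤ q) (hu : q ≤ (1 + ε) * p + ε * q) :
    -δ < q / p - 1 ∧ q / p - 1 < δ := by
  have hεδ : ε < δ := by nlinarith [mul_nonneg hε0.le hδ.le]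
  constructor
  · have h3 : (1 - δ) * p < q := by nlinarith [mul_pos (sub_pos.2 hεδ) hp]
    have h4 := (lt_div_iff₀ hp).2 h3
    linarith
  · have h5 : (1 - ε) * q ≤ (1 + ε) * p := by linarith
    have h6 : (0:ℝ) < 1 - ε := by linarith
    have h8 : (1 + ε) * p < (1 - ε) * ((1 + δ) * p) := by nlinarith [mul_pos hp hε0]
    have h9 : (1 - ε) * q < (1 - ε) * ((1 + δ) * p) := lt_of_le_of_lt h5 h8
    have h3 : q < (1 + δ) * p := lt_of_mul_lt_mul_left h9 h6.le
    have h4 := (div_lt_iff₀ hp).2 h3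
    linarith

open scoped Convolution in
lemma conv_long {f g : ℝ → ℝ} (hf0 : ∀ x < (0:ℝ), f x = 0) (hg0 : ∀ x < (0:ℝ), g x = 0)
    (hf : LongDensity f) (hg : LongDensity g) :
    LongDensity (conv f g) ∧ ∀ x < (0:ℝ), conv f g x = 0 := by
  have hf1 : ∀ x, 0 ≤ f x := hf.1.1
  have hg1 : ∀ x, 0 ≤ g x := hg.1.1
  have hfi : Integrable f := hf.1.integrable'
  have hgi : Integrable g := hg.1.integrable'
  obtain ⟨Cf, hCf⟩ := hf.eventually_le'
  obtain ⟨Cg, hCg⟩ := hg.eventually_le'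
  obtain ⟨X0, hX0⟩ := eventually_atTop.1 (hCf.and hCg)
  set X := max X0 0 with hXdef
  set C := max Cf Cg with hCdef
  have hX : ∀ z, X ≤ z → f z ≤ C ∧ g z ≤ C := by
    intro z hz
    obtain ⟨h1, h2⟩ := hX0 z (le_trans (le_max_left _ _) hz)
    exact ⟨le_trans h1 (le_max_left _ _), le_trans h2 (le_max_right _ _)⟩
  have hC0 : 0 ≤ C := le_trans (hf1 X) (hX X le_rfl).1
  have hX0' : (0:ℝ) ≤ X := le_max_right _ _
  -- integrability of slices
  have hintg : ∀ x : ℝ, 2 * X ≤ x → Integrable (fun u => f (x - u) * g u) := by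
    intro x hx
    have haesm : AEStronglyMeasurable (fun u => f (x - u) * g u) volume :=
      (aesm_comp_sub' hfi.1 x).mul hgi.1
    refine Integrable.mono'
      ((hgi.const_mul C).add ((integrable_comp_sub' hfi x).const_mul C)) haesm ?_
    refine Eventually.of_forall fun u => ?_
    rw [Real.norm_of_nonneg (mul_nonneg (hf1 _) (hg1 _))]
    rcases le_or_gt u (x - X) with hu | hu
    · have hfb : f (x - u) ≤ C := (hX (x - u) (by linarith)).1
      have h2 := mul_le_mul_of_nonneg_right hfb (hg1 u)
      have h3 : 0 ≤ C * f (x - u) := mul_nonneg hC0 (hf1 _)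
      simp only [Pi.add_apply]
      nlinarith
    · have hgb : g u ≤ C := (hX u (by linarith)).2
      have h2 := mul_le_mul_of_nonneg_left hgb (hf1 (x - u))
      have h3 : 0 ≤ C * g u := mul_nonneg hC0 (hg1 _)
      simp only [Pi.add_apply]
      nlinarith
  -- commutativity
  have hcomm : ∀ y : ℝ, conv f g y = ∫ v, f v * g (y - v) := by
    intro y
    have h := integral_comp_sub' (fun v => f v * g (y - v)) y
    simp only [sub_sub_cancel] at h
    rw [conv]; exact h
  have hintψ : ∀ y : ℝ, 2 * X ≤ y → Integrable (fun v => f v * g (y - v)) := by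
    intro y hy
    have h1 := integrable_comp_sub' (hintg y hy) y
    simp only [sub_sub_cancel] at h1
    exact h1
  have hh0 : ∀ x, 0 ≤ conv f g x := fun x =>
    integral_nonneg fun u => mul_nonneg (hf1 _) (hg1 _)
  have hsupp : ∀ x, x < (0:ℝ) → conv f g x = 0 := by
    intro x hx
    rw [conv]
    have h : (fun u => f (x - u) * g u) = fun _ => (0:ℝ) := by
      funext u
      rcases lt_or_ge u 0 with hu | hu
      · rw [hg0 u hu, mul_zero]
      · rw [hf0 (x - u) (by linarith), zero_mul]
    rw [h, integral_zero]
  have hint1 : (∫ x, conv f g x) = 1 := by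
    have h1 : ∀ x : ℝ, conv f g x = (g ⋆[ContinuousLinearMap.mul ℝ ℝ, volume] f) x := by
      intro x
      rw [conv, convolution_def]
      simp only [ContinuousLinearMap.mul_apply']
      simp_rw [mul_comm]
    calc (∫ x, conv f g x) = ∫ x, (g ⋆[ContinuousLinearMap.mul ℝ ℝ, volume] f) x := by
          congr 1; funext x; exact h1 x
      _ = 1 := by rw [integral_convolution _ hgi hfi]; simp [hf.1.2, hg.1.2]
  -- eventual positivity
  obtain ⟨Tp, hTp⟩ := eventually_atTop.1 hf.2.1
  have hunion : (⋃ n : ℕ, Iic (n:ℝ)) = univ := by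
    ext z
    simp only [mem_iUnion, mem_Iic, mem_univ, iff_true]
    exact exists_nat_ge z
  have htend : Tendsto (fun n : ℕ => ∫ u in Iic (n:ℝ), g u) atTop (nhds 1) := by
    have h := tendsto_setIntegral_of_monotone (fun n : ℕ => measurableSet_Iic)
      (fun i j hij => Iic_subset_Iic.2 (Nat.cast_le.2 hij))
      (by rw [hunion]; exact hgi.integrableOn)
    rw [hunion] at h
    simpa [hg.1.2] using h
  obtain ⟨M, hM⟩ := (htend.eventually (eventually_ge_nhds (by norm_num : (1:ℝ)/2 < 1))).exists
  have hSg : 0 < volume (Function.support g ∩ Iic (M:ℝ)) := by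
    rw [← setIntegral_pos_iff_support_of_nonneg_ae (Eventually.of_forall hg1)
      hgi.integrableOn]
    linarith
  have hposx : ∀ x : ℝ, max (2*X) (Tp + M) ≤ x → 0 < conv f g x := by
    intro x hx
    have hxX : 2*X ≤ x := le_trans (le_max_left _ _) hx
    have hint := hintg x hxX
    have h1 : 0 < ∫ u in Iic (M:ℝ), f (x - u) * g u := by
      rw [setIntegral_pos_iff_support_of_nonneg_ae
        (Eventually.of_forall fun u => mul_nonneg (hf1 _) (hg1 _)) hint.integrableOn]
      refine lt_of_lt_of_le hSg (measure_mono ?_)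
      rintro u ⟨hu1, hu2⟩
      refine ⟨?_, hu2⟩
      have hgu : 0 < g u := lt_of_le_of_ne (hg1 u) (Ne.symm hu1)
      have huM : u ≤ (M:ℝ) := hu2
      have hTpx : Tp + (M:ℝ) ≤ x := le_trans (le_max_right _ _) hx
      have hfu : 0 < f (x - u) := hTp (x - u) (by linarith)
      exact ne_of_gt (mul_pos hfu hgu)
    calc (0:ℝ) < ∫ u in Iic (M:ℝ), f (x-u) * g u := h1
      _ ≤ ∫ u, f (x-u) * g u := setIntegral_le_integral hint
          (Eventually.of_forall fun u => mul_nonneg (hf1 _) (hg1 _))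
      _ = conv f g x := rfl
  have hposev : ∀ᶠ x in atTop, 0 < conv f g x := by
    filter_upwards [eventually_ge_atTop (max (2*X) (Tp + (M:ℝ)))] with x hx
    exact hposx x hx
  -- the key eventual estimate
  have main : ∀ a : ℝ, 0 ≤ a → ∀ ε : ℝ, 0 < ε →
      ∀ᶠ x in atTop, (1 - ε) * conv f g x ≤ conv f g (x + a) ∧
        conv f g (x + a) ≤ (1 + ε) * conv f g x + ε * conv f g (x + a) := by
    intro a ha ε hε
    set N := ⌈1/ε⌉₊ with hNdef
    have hN1 : 1 ≤ N := Nat.one_le_ceil_iff.2 (by positivity)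
    have hNpos : (0:ℝ) < N := by exact_mod_cast hN1
    have hNε : 1 / (N:ℝ) ≤ ε := by
      rw [div_le_iff₀ hNpos]
      have h1 : 1/ε ≤ (N:ℝ) := Nat.le_ceil _
      calc (1:ℝ) = ε * (1/ε) := by field_simp
        _ ≤ ε * N := mul_le_mul_of_nonneg_left h1 hε.le
    have hftail : ∀ᶠ z in atTop, (1-ε) * f z ≤ f (z + a) ∧ f (z + a) ≤ (1+ε) * f z := by
      filter_upwards [hf.2.1, Metric.tendsto_nhds.1 (hf.2.2 a) ε hε] with z h1 h2
      rw [Real.dist_eq, abs_lt] at h2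
      have hz0 : f z ≠ 0 := ne_of_gt h1
      have heq : f (z + a) / f z * f z = f (z + a) := div_mul_cancel₀ _ hz0
      constructor <;> nlinarith [h2.1, h2.2]
    have hgtail : ∀ᶠ z in atTop, (1-ε) * g z ≤ g (z + a) ∧ g (z + a) ≤ (1+ε) * g z := by
      filter_upwards [hg.2.1, Metric.tendsto_nhds.1 (hg.2.2 a) ε hε] with z h1 h2
      rw [Real.dist_eq, abs_lt] at h2
      have hz0 : g z ≠ 0 := ne_of_gt h1
      have heq : g (z + a) / g z * g z = g (z + a) := div_mul_cancel₀ _ hz0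
      constructor <;> nlinarith [h2.1, h2.2]
    obtain ⟨Tf, hTf⟩ := eventually_atTop.1 hftail
    obtain ⟨Tg, hTg⟩ := eventually_atTop.1 hgtail
    filter_upwards [eventually_ge_atTop (2*X), eventually_ge_atTop (2*Tf),
      eventually_ge_atTop (2*(Tg + N*a))] with x hx1 hx2 hx3
    have hya : 2*X ≤ x + a := by linarith
    have hIφx := hintg x hx1
    have hIφy := hintg (x+a) hya
    have hIψx := hintψ x hx1
    have hIψy := hintψ (x+a) hya
    obtain ⟨j, hjN, hCj⟩ := blocks' hIψy (fun v => mul_nonneg (hf1 _) (hg1 _)) (x/2) a ha N hN1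
    have hjR : (j:ℝ) ≤ N := by exact_mod_cast (le_of_lt hjN)
    have hj0 : (0:ℝ) ≤ (j:ℝ) := Nat.cast_nonneg j
    obtain ⟨m, hmdef⟩ : ∃ m : ℝ, m = x/2 - (j:ℝ)*a := ⟨_, rfl⟩
    have hmx2 : m ≤ x/2 := by rw [hmdef]; nlinarith
    have hmTg : Tg ≤ m := by
      have : (j:ℝ) * a ≤ (N:ℝ) * a := mul_le_mul_of_nonneg_right hjR ha
      rw [hmdef]; linarith
    -- split identities
    have hsx := split_integral' hIφx x m
    have hsy := split_integral' hIφy (x+a) m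
    simp only [sub_sub_cancel] at hsx hsy
    have hEx : conv f g x =
        (∫ u in Iic m, f (x - u) * g u) + ∫ v in Iio (x - m), f v * g (x - v) := hsx
    have hEy : conv f g (x + a) =
        (∫ u in Iic m, f (x + a - u) * g u) + ∫ v in Iio (x + a - m), f v * g (x + a - v) := hsy
    -- piece 1 bounds
    have hub1 : (∫ u in Iic m, f (x + a - u) * g u) ≤
        (1+ε) * ∫ u in Iic m, f (x - u) * g u := by
      rw [← integral_const_mul]
      refine setIntegral_mono_on hIφy.integrableOn
        ((hIφx.const_mul (1+ε)).integrableOn) measurableSet_Iic (fun u hu => ?_)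
      rw [mem_Iic] at hu
      have harg : Tf ≤ x - u := by linarith
      have hb := (hTf (x - u) harg).2
      have hxa : x + a - u = (x - u) + a := by ring
      rw [hxa]
      calc f ((x - u) + a) * g u ≤ ((1+ε) * f (x - u)) * g u :=
            mul_le_mul_of_nonneg_right hb (hg1 u)
        _ = (1+ε) * (f (x - u) * g u) := by ring
    have hlb1 : (1-ε) * (∫ u in Iic m, f (x - u) * g u) ≤
        ∫ u in Iic m, f (x + a - u) * g u := by
      rw [← integral_const_mul]
      refine setIntegral_mono_on ((hIφx.const_mul (1-ε)).integrableOn)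
        hIφy.integrableOn measurableSet_Iic (fun u hu => ?_)
      rw [mem_Iic] at hu
      have harg : Tf ≤ x - u := by linarith
      have hb := (hTf (x - u) harg).1
      have hxa : x + a - u = (x - u) + a := by ring
      rw [hxa]
      calc (1-ε) * (f (x - u) * g u) = ((1-ε) * f (x - u)) * g u := by ring
        _ ≤ f ((x - u) + a) * g u := mul_le_mul_of_nonneg_right hb (hg1 u)
    -- piece 2 bounds
    have hub2 : (∫ v in Iio (x - m), f v * g (x + a - v)) ≤
        (1+ε) * ∫ v in Iio (x - m), f v * g (x - v) := by
      rw [← integral_const_mul]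
      refine setIntegral_mono_on hIψy.integrableOn
        ((hIψx.const_mul (1+ε)).integrableOn) measurableSet_Iio (fun v hv => ?_)
      rw [mem_Iio] at hv
      have harg : Tg ≤ x - v := by linarith
      have hb := (hTg (x - v) harg).2
      have hxa : x + a - v = (x - v) + a := by ring
      rw [hxa]
      calc f v * g ((x - v) + a) ≤ f v * ((1+ε) * g (x - v)) :=
            mul_le_mul_of_nonneg_left hb (hf1 v)
        _ = (1+ε) * (f v * g (x - v)) := by ring
    have hlb2 : (1-ε) * (∫ v in Iio (x - m), f v * g (x - v)) ≤
        ∫ v in Iio (x - m), f v * g (x + a - v) := by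
      rw [← integral_const_mul]
      refine setIntegral_mono_on ((hIψx.const_mul (1-ε)).integrableOn)
        hIψy.integrableOn measurableSet_Iio (fun v hv => ?_)
      rw [mem_Iio] at hv
      have harg : Tg ≤ x - v := by linarith
      have hb := (hTg (x - v) harg).1
      have hxa : x + a - v = (x - v) + a := by ring
      rw [hxa]
      calc (1-ε) * (f v * g (x - v)) = f v * ((1-ε) * g (x - v)) := by ring
        _ ≤ f v * g ((x - v) + a) := mul_le_mul_of_nonneg_left hb (hf1 v)
    -- decomposition of the y-side tail
    have hdec : (∫ v in Iio (x + a - m), f v * g (x + a - v)) =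
        (∫ v in Iio (x - m), f v * g (x + a - v)) +
          ∫ v in Ico (x - m) (x + a - m), f v * g (x + a - v) := by
      rw [← setIntegral_union (by
          rw [Set.disjoint_left]
          rintro v hv ⟨hv2, _⟩
          exact absurd hv (not_lt.2 hv2))
        measurableSet_Ico hIψy.integrableOn hIψy.integrableOn,
        Iio_union_Ico_eq_Iio (by linarith)]
    have hico : Ico (x - m) (x + a - m) = Ico (x/2 + (j:ℝ) * a) (x/2 + ((j:ℝ) + 1) * a) := by
      rw [hmdef]; congr 1 <;> ring
    have hCj' : (∫ v in Ico (x - m) (x + a - m), f v * g (x + a - v)) ≤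
        ε * conv f g (x + a) := by
      rw [hico]
      refine le_trans hCj ?_
      rw [← hcomm (x + a)]
      calc conv f g (x+a) / N = conv f g (x+a) * (1/N) := by ring
        _ ≤ conv f g (x+a) * ε := mul_le_mul_of_nonneg_left hNε (hh0 _)
        _ = ε * conv f g (x+a) := by ring
    have hCpos : 0 ≤ ∫ v in Ico (x - m) (x + a - m), f v * g (x + a - v) :=
      setIntegral_nonneg measurableSet_Ico (fun v _ => mul_nonneg (hf1 _) (hg1 _))
    constructor
    · calc (1-ε) * conv f g x
          = (1-ε) * (∫ u in Iic m, f (x - u) * g u) +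
            (1-ε) * ∫ v in Iio (x - m), f v * g (x - v) := by rw [hEx]; ring
        _ ≤ (∫ u in Iic m, f (x + a - u) * g u) +
            ∫ v in Iio (x - m), f v * g (x + a - v) := add_le_add hlb1 hlb2
        _ ≤ conv f g (x+a) := by rw [hEy, hdec]; linarith
    · calc conv f g (x+a)
          = (∫ u in Iic m, f (x + a - u) * g u) +
            ((∫ v in Iio (x - m), f v * g (x + a - v)) +
              ∫ v in Ico (x - m) (x + a - m), f v * g (x + a - v)) := by rw [hEy, hdec]
        _ ≤ (1+ε) * (∫ u in Iic m, f (x - u) * g u) +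
            ((1+ε) * (∫ v in Iio (x - m), f v * g (x - v)) + ε * conv f g (x+a)) :=
            add_le_add hub1 (add_le_add hub2 hCj')
        _ = (1+ε) * conv f g x + ε * conv f g (x+a) := by rw [hEx]; ring
  -- ratio tends to 1 for nonnegative shifts
  have hratio_nn : ∀ a : ℝ, 0 ≤ a →
      Tendsto (fun x => conv f g (x + a) / conv f g x) atTop (nhds 1) := by
    intro a ha
    rw [Metric.tendsto_nhds]
    intro δ hδ
    have hd4 : (0:ℝ) < δ + 4 := by linarith
    obtain ⟨ε, hεdef⟩ : ∃ ε : ℝ, ε = min (δ/(δ+4)) (1/2) := ⟨_, rfl⟩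
    have hε0 : (0:ℝ) < ε := by
      rw [hεdef]; exact lt_min (by positivity) (by norm_num)
    have hε1 : ε * (δ + 4) ≤ δ := by
      rw [hεdef, ← le_div_iff₀ hd4]
      exact min_le_left _ _
    have hε2 : ε ≤ 1/2 := by rw [hεdef]; exact min_le_right _ _
    filter_upwards [main a ha ε hε0, eventually_ge_atTop (max (2*X) (Tp + (M:ℝ)))]
      with x hm hx
    have h1 : 0 < conv f g x := hposx x hx
    have h2 : 0 < conv f g (x+a) := hposx (x+a) (le_trans hx (by linarith))
    obtain ⟨hl, hu⟩ := hm
    rw [Real.dist_eq, abs_lt]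
    exact arith_ratio hδ hε0 hε1 hε2 h1 hl hu
  -- all shifts
  have hratio : ∀ a : ℝ, Tendsto (fun x => conv f g (x + a) / conv f g x) atTop (nhds 1) := by
    intro a
    rcases le_or_gt 0 a with ha | ha
    · exact hratio_nn a ha
    · have hb : (0:ℝ) ≤ -a := by linarith
      have h1 := hratio_nn (-a) hb
      have h2 : Tendsto (fun z => (conv f g (z + -a) / conv f g z)⁻¹) atTop (nhds 1) := by
        have := h1.inv₀ (one_ne_zero)
        simpa using this
      have h3 : Tendsto ((fun z => (conv f g (z + -a) / conv f g z)⁻¹) ∘ (fun x => x + a))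
          atTop (nhds 1) := h2.comp (tendsto_atTop_add_const_right atTop a tendsto_id)
      refine h3.congr fun x => ?_
      simp only [Function.comp_apply]
      rw [inv_div]
      congr 1
      ring_nf
  exact ⟨⟨⟨hh0, hint1⟩, hposev, hratio⟩, hsupp⟩


theorem stmt12 (f : ℝ → ℝ) (hf0 : ∀ x < (0:ℝ), f x = 0) (hf : LongDensity f) :
    ∀ n : ℕ, LongDensity (fconvPow f n) := by
  have key : ∀ n : ℕ, LongDensity (fconvPow f n) ∧ ∀ x < (0:ℝ), fconvPow f n x = 0 := by
    intro n
    induction n with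
    | zero => exact ⟨hf, hf0⟩
    | succ n ih =>
      have h := conv_long hf0 ih.2 hf ih.1
      exact ⟨h.1, h.2⟩
  exact fun n => (key n).1
end
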